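/- arXiv:1501.01708 — 10 statements merged into one kernel-verified Lean document; each statement's English description precedes it below -/
import Mathlib

section
/- Let s be a positive integer, A ∈ ℝ^{m×N} a matrix, x ∈ ℝ^N a vector, k ∈ {1,…,N}, and let t = −(√(s+1) − 1)/√s. Then t² < 1 and ‖A(x + t e_k)‖₂² − ‖A(t² x − t e_k)‖₂² = (1 − t⁴)·(⟨Ax, Ax⟩ − √s·⟨Ax, A e_k⟩). -/
open Matrix

/-- For a positive integer `s`, a matrix `A ∈ ℝ^{m×N}`, a vector `x ∈ ℝ^N`,
an index `k`, and `t = −(√(s+1) − 1)/√s`, we have `t² < 1` and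
`‖A(x + t e_k)‖₂² − ‖A(t² x − t e_k)‖₂² = (1 − t⁴)(⟨Ax, Ax⟩ − √s ⟨Ax, A e_k⟩)`. -/
theorem omp_lemma1_minus (s m N : ℕ) (hs : 0 < s)
    (A : Matrix (Fin m) (Fin N) ℝ) (x : Fin N → ℝ) (k : Fin N)
    (t : ℝ) (ht : t = -((Real.sqrt ((s : ℝ) + 1) - 1) / Real.sqrt (s : ℝ))) :
    t ^ 2 < 1 ∧
    (A *ᵥ (x + t • (Pi.single k 1 : Fin N → ℝ))) ⬝ᵥ (A *ᵥ (x + t • (Pi.single k 1 : Fin N → ℝ)))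
      - (A *ᵥ (t ^ 2 • x - t • (Pi.single k 1 : Fin N → ℝ))) ⬝ᵥ
          (A *ᵥ (t ^ 2 • x - t • (Pi.single k 1 : Fin N → ℝ)))
    = (1 - t ^ 4) *
        ((A *ᵥ x) ⬝ᵥ (A *ᵥ x)
          - Real.sqrt (s : ℝ) * ((A *ᵥ x) ⬝ᵥ (A *ᵥ (Pi.single k 1 : Fin N → ℝ)))) := by
  have hs1 : (1:ℝ) ≤ (s:ℝ) := by exact_mod_cast hs
  set a := Real.sqrt (s:ℝ) with ha_def
  set b := Real.sqrt ((s:ℝ)+1) with hb_def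
  have ha : 0 < a := Real.sqrt_pos.2 (by linarith)
  have ha2 : a^2 = (s:ℝ) := Real.sq_sqrt (by linarith)
  have hb2 : b^2 = (s:ℝ)+1 := Real.sq_sqrt (by linarith)
  have hbnn : 0 ≤ b := Real.sqrt_nonneg _
  have hb1 : 1 < b := by nlinarith
  have ht2 : t^2 < 1 := by
    rw [ht]
    have h1 : (-((b-1)/a))^2 = (b-1)^2 / a^2 := by ring
    rw [h1, div_lt_one (by positivity)]
    nlinarith
  have key : 2*t = -a*(1-t^2) := by
    rw [ht]
    field_simp
    nlinarith
  refine ⟨ht2, ?_⟩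
  set u := A *ᵥ x with hu
  set v := A *ᵥ (Pi.single k 1 : Fin N → ℝ) with hv
  have e1 : A *ᵥ (x + t • (Pi.single k 1 : Fin N → ℝ)) = u + t • v := by
    rw [mulVec_add, mulVec_smul]
  have e2 : A *ᵥ (t ^ 2 • x - t • (Pi.single k 1 : Fin N → ℝ)) = t^2 • u - t • v := by
    rw [mulVec_sub, mulVec_smul, mulVec_smul]
  rw [e1, e2]
  have hcomm : v ⬝ᵥ u = u ⬝ᵥ v := dotProduct_comm _ _
  simp only [dotProduct_add, add_dotProduct, dotProduct_sub, sub_dotProduct,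
    dotProduct_smul, smul_dotProduct, smul_eq_mul, hcomm]
  set P := u ⬝ᵥ u
  set Q := u ⬝ᵥ v
  set R := v ⬝ᵥ v
  linear_combination (1+t^2) * Q * key
end

section
/- Let s be a positive integer, let A ∈ ℝ^{m×N} satisfy the restricted isometry property of order s+1 with constant δ, let x ∈ ℝ^N satisfy ‖x‖₂ = 1 and have at most s nonzero entries, let k ∉ supp(x), and let t = −(√(s+1) − 1)/√s. Then ‖A(x + t e_k)‖₂² − ‖A(t² x − t e_k)‖₂² ≥ (1 + t²)² · (1/√(s+1) − δ). -/
open Matrix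

/-- If `A` satisfies the RIP of order `s+1` with constant `δ`, `x` is a unit-norm
vector with at most `s` nonzero entries, `k ∉ supp(x)`, and `t = −(√(s+1) − 1)/√s`, then
`‖A(x + t e_k)‖₂² − ‖A(t² x − t e_k)‖₂² ≥ (1 + t²)² (1/√(s+1) − δ)`. -/
theorem omp_lemma2_key_bound (s m N : ℕ) (hs : 0 < s)
    (A : Matrix (Fin m) (Fin N) ℝ) (δ : ℝ)
    (hRIP : ∀ y : Fin N → ℝ, (Function.support y).ncard ≤ s + 1 →
      (1 - δ) * (y ⬝ᵥ y) ≤ (A *ᵥ y) ⬝ᵥ (A *ᵥ y) ∧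
        (A *ᵥ y) ⬝ᵥ (A *ᵥ y) ≤ (1 + δ) * (y ⬝ᵥ y))
    (x : Fin N → ℝ) (hxnorm : x ⬝ᵥ x = 1)
    (hxsupp : (Function.support x).ncard ≤ s)
    (k : Fin N) (hk : k ∉ Function.support x)
    (t : ℝ) (ht : t = -((Real.sqrt ((s : ℝ) + 1) - 1) / Real.sqrt (s : ℝ))) :
    (A *ᵥ (x + t • (Pi.single k 1 : Fin N → ℝ))) ⬝ᵥ (A *ᵥ (x + t • (Pi.single k 1 : Fin N → ℝ)))
      - (A *ᵥ (t ^ 2 • x - t • (Pi.single k 1 : Fin N → ℝ))) ⬝ᵥ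
          (A *ᵥ (t ^ 2 • x - t • (Pi.single k 1 : Fin N → ℝ)))
    ≥ (1 + t ^ 2) ^ 2 * (1 / Real.sqrt ((s : ℝ) + 1) - δ) := by
  have hs1 : (0:ℝ) < (s:ℝ) := by exact_mod_cast hs
  have hbpos : 0 < Real.sqrt (s:ℝ) := Real.sqrt_pos.2 hs1
  have hapos : 0 < Real.sqrt ((s:ℝ) + 1) := Real.sqrt_pos.2 (by linarith)
  have ha : Real.sqrt ((s:ℝ) + 1) ^ 2 = (s:ℝ) + 1 := Real.sq_sqrt (by linarith)
  have hb : Real.sqrt (s:ℝ) ^ 2 = (s:ℝ) := Real.sq_sqrt hs1.le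
  set a := Real.sqrt ((s:ℝ) + 1) with ha_def
  set b := Real.sqrt (s:ℝ) with hb_def
  have hxk : x k = 0 := by simpa [Function.mem_support] using hk
  set u := x + t • (Pi.single k 1 : Fin N → ℝ) with hu
  set v := t ^ 2 • x - t • (Pi.single k 1 : Fin N → ℝ) with hv
  -- support bounds
  have hsub : ∀ w : Fin N → ℝ, (∀ j, w j ≠ 0 → x j ≠ 0 ∨ j = k) →
      (Function.support w).ncard ≤ s + 1 := by
    intro w hw
    have hsubset : Function.support w ⊆ Function.support x ∪ {k} := by
      intro j hj
      rcases hw j hj with h | h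
      · exact Or.inl h
      · exact Or.inr (by simp [h])
    calc (Function.support w).ncard
        ≤ (Function.support x ∪ {k}).ncard :=
          Set.ncard_le_ncard hsubset (Set.toFinite _)
      _ ≤ (Function.support x).ncard + ({k} : Set (Fin N)).ncard :=
          Set.ncard_union_le _ _
      _ ≤ s + 1 := by simpa using hxsupp
  have husupp : (Function.support u).ncard ≤ s + 1 := by
    apply hsub
    intro j hj
    by_cases hjk : j = k
    · exact Or.inr hjk
    · left
      intro hxj
      apply hj
      simp [hu, Pi.single_eq_of_ne hjk, hxj]
  have hvsupp : (Function.support v).ncard ≤ s + 1 := by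
    apply hsub
    intro j hj
    by_cases hjk : j = k
    · exact Or.inr hjk
    · left
      intro hxj
      apply hj
      simp [hv, Pi.single_eq_of_ne hjk, hxj]
  -- dot products
  have huu : u ⬝ᵥ u = 1 + t ^ 2 := by
    simp only [hu, dotProduct_add, add_dotProduct, dotProduct_smul, smul_dotProduct,
      dotProduct_single, single_dotProduct, hxnorm, hxk, smul_eq_mul,
      Pi.add_apply, Pi.smul_apply, Pi.single_eq_same]
    ring
  have hvv : v ⬝ᵥ v = t ^ 2 * (1 + t ^ 2) := by
    simp only [hv, dotProduct_sub, sub_dotProduct, dotProduct_smul, smul_dotProduct,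
      dotProduct_single, single_dotProduct, hxnorm, hxk, smul_eq_mul,
      Pi.sub_apply, Pi.smul_apply, Pi.single_eq_same]
    ring
  obtain ⟨h1, -⟩ := hRIP u husupp
  obtain ⟨-, h2⟩ := hRIP v hvsupp
  -- key algebraic identity: (1 - t^2) * a = 1 + t^2
  have ht2 : t ^ 2 = (a - 1) ^ 2 / (s : ℝ) := by
    rw [ht, ← hb]
    field_simp
  have key : (1 - t ^ 2) * a = 1 + t ^ 2 := by
    rw [ht2]
    field_simp
    nlinarith [ha]
  -- conclude
  have hrhs : (1 + t ^ 2) ^ 2 * (1 / a - δ) =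
      (1 - δ) * (1 + t ^ 2) - (1 + δ) * (t ^ 2 * (1 + t ^ 2)) := by
    have hane : a ≠ 0 := ne_of_gt hapos
    field_simp
    nlinarith [key]
  rw [huu] at h1
  rw [hvv] at h2
  rw [hrhs]
  linarith
end

section
/- Let s be a positive integer and suppose A ∈ ℝ^{m×N} satisfies the restricted isometry property of order s+1 with some constant δ < 1/√(s+1). If x ∈ ℝ^N has support that is a nonempty subset of {1, 2, …, s}, then max_{k ∈ {1,…,s}} |⟨Ax, A e_k⟩| > |⟨Ax, A e_j⟩| for every index j > s. -/
set_option maxHeartbeats 1000000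

open Matrix

/-- If `A` satisfies the RIP of order `s+1` with constant `δ < 1/√(s+1)` and
`x` has support a nonempty subset of the first `s` indices, then
`max_{k < s} |⟨Ax, A e_k⟩| > |⟨Ax, A e_j⟩|` for every index `j` with `j ≥ s`. -/
theorem omp_lemma2 (s m N : ℕ) (hs : 0 < s)
    (A : Matrix (Fin m) (Fin N) ℝ) (δ : ℝ) (hδ : δ < 1 / Real.sqrt ((s : ℝ) + 1))
    (hRIP : ∀ y : Fin N → ℝ, (Function.support y).ncard ≤ s + 1 →
      (1 - δ) * (y ⬝ᵥ y) ≤ (A *ᵥ y) ⬝ᵥ (A *ᵥ y) ∧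
        (A *ᵥ y) ⬝ᵥ (A *ᵥ y) ≤ (1 + δ) * (y ⬝ᵥ y))
    (x : Fin N → ℝ)
    (hsupp : Function.support x ⊆ {i : Fin N | (i : ℕ) < s})
    (hne : (Function.support x).Nonempty) :
    ∀ j : Fin N, s ≤ (j : ℕ) →
      |(A *ᵥ x) ⬝ᵥ (A *ᵥ (Pi.single j 1 : Fin N → ℝ))| <
        ⨆ k : {i : Fin N // (i : ℕ) < s},
          |(A *ᵥ x) ⬝ᵥ (A *ᵥ (Pi.single (k : Fin N) 1 : Fin N → ℝ))| := by
  classical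
  intro j hj
  by_contra hcon
  push_neg at hcon
  -- basic facts
  have hxj : x j = 0 := by
    by_contra h
    have := hsupp h
    simp only [Set.mem_setOf_eq] at this
    omega
  set r2 : ℝ := x ⬝ᵥ x with hr2def
  have hr2sum : r2 = ∑ i, x i * x i := rfl
  have hr2pos : 0 < r2 := by
    obtain ⟨i0, hi0⟩ := hne
    have h1 : x i0 * x i0 ≤ r2 := by
      rw [hr2sum]
      exact Finset.single_le_sum (f := fun i => x i * x i)
        (fun i _ => mul_self_nonneg _) (Finset.mem_univ i0)
    have h2 := mul_self_pos.mpr hi0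
    linarith only [h1, h2]
  -- support cardinalities
  have hsx : (Function.support x).ncard ≤ s := by
    have h1 : (Function.support x).ncard ≤ (Set.Iio s : Set ℕ).ncard :=
      Set.ncard_le_ncard_of_injOn (fun i => (i : ℕ))
        (fun a ha => hsupp ha) (Fin.val_injective.injOn) (Set.finite_Iio s)
    have h2 : (Set.Iio s : Set ℕ).ncard = s := by
      rw [← Finset.coe_Iio, Set.ncard_coe_finset, Nat.card_Iio]
    omega
  have hsupp1 : ∀ t : ℝ, (Function.support (t • x + Pi.single j (1:ℝ))).ncard ≤ s + 1 := by
    intro t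
    have hsub : Function.support (t • x + Pi.single j (1:ℝ)) ⊆ Function.support x ∪ {j} := by
      intro i hi
      by_contra hni
      simp only [Set.mem_union, Set.mem_singleton_iff, not_or] at hni
      obtain ⟨h1, h2⟩ := hni
      have hx0 : x i = 0 := by simpa using h1
      exact hi (by simp [hx0, Pi.single_eq_of_ne h2])
    calc (Function.support (t • x + Pi.single j (1:ℝ))).ncard
        ≤ (Function.support x ∪ {j}).ncard := Set.ncard_le_ncard hsub (Set.toFinite _)
      _ ≤ (Function.support x).ncard + ({j} : Set (Fin N)).ncard := Set.ncard_union_le _ _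
      _ ≤ s + 1 := by simpa [Set.ncard_singleton] using hsx
  -- abbreviations
  set b1 : ℝ := (A *ᵥ x) ⬝ᵥ (A *ᵥ (Pi.single j 1 : Fin N → ℝ)) with hb1def
  set P : ℝ := (A *ᵥ x) ⬝ᵥ (A *ᵥ x) with hPdef
  set Q : ℝ := (A *ᵥ (Pi.single j 1 : Fin N → ℝ)) ⬝ᵥ (A *ᵥ (Pi.single j 1 : Fin N → ℝ)) with hQdef
  -- norm expansions
  have hxe : x ⬝ᵥ (Pi.single j 1 : Fin N → ℝ) = 0 := by
    rw [dotProduct_single, hxj, zero_mul]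
  have hex : (Pi.single j 1 : Fin N → ℝ) ⬝ᵥ x = 0 := by rw [dotProduct_comm]; exact hxe
  have hee : (Pi.single j 1 : Fin N → ℝ) ⬝ᵥ (Pi.single j 1 : Fin N → ℝ) = 1 := by
    rw [dotProduct_single, Pi.single_eq_same, one_mul]
  have hnorm : ∀ t : ℝ, (t • x + Pi.single j (1:ℝ)) ⬝ᵥ (t • x + Pi.single j (1:ℝ))
      = r2 * (t*t) + 1 := by
    intro t
    simp only [add_dotProduct, dotProduct_add, smul_dotProduct, dotProduct_smul,
      hxe, hex, hee, smul_eq_mul, ← hr2def]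
    ring
  have hAsym : (A *ᵥ (Pi.single j 1 : Fin N → ℝ)) ⬝ᵥ (A *ᵥ x) = b1 := by
    rw [hb1def, dotProduct_comm]
  have hAexp : ∀ t : ℝ, (A *ᵥ (t • x + Pi.single j (1:ℝ))) ⬝ᵥ (A *ᵥ (t • x + Pi.single j (1:ℝ)))
      = P * (t*t) + (2*b1) * t + Q := by
    intro t
    rw [Matrix.mulVec_add, Matrix.mulVec_smul]
    simp only [add_dotProduct, dotProduct_add, smul_dotProduct, dotProduct_smul,
      smul_eq_mul, hAsym, ← hPdef, ← hQdef, ← hb1def]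
    ring
  -- RIP instances
  have hxcard : (Function.support x).ncard ≤ s + 1 := le_trans hsx (Nat.le_succ s)
  have hPlow : (1 - δ) * r2 ≤ P := by
    have := (hRIP x hxcard).1
    rwa [← hr2def, ← hPdef] at this
  have hPup : P ≤ (1 + δ) * r2 := by
    have := (hRIP x hxcard).2
    rwa [← hr2def, ← hPdef] at this
  have hecard : (Function.support (Pi.single j (1:ℝ))).ncard ≤ s + 1 := by
    have := hsupp1 0
    simpa using this
  have hQlow : 1 - δ ≤ Q := by
    have := (hRIP (Pi.single j (1:ℝ)) hecard).1
    rwa [hee, mul_one, ← hQdef] at this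
  have hQup : Q ≤ 1 + δ := by
    have := (hRIP (Pi.single j (1:ℝ)) hecard).2
    rwa [hee, mul_one, ← hQdef] at this
  -- quadratic inequalities
  have hlow : ∀ t : ℝ, 0 ≤ (P - (1-δ)*r2) * (t*t) + (2*b1) * t + (Q - (1-δ)) := by
    intro t
    have h := (hRIP _ (hsupp1 t)).1
    rw [hnorm t, hAexp t] at h
    linarith only [h]
  have hup : ∀ t : ℝ, 0 ≤ ((1+δ)*r2 - P) * (t*t) + (-(2*b1)) * t + ((1+δ) - Q) := by
    intro t
    have h := (hRIP _ (hsupp1 t)).2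
    rw [hnorm t, hAexp t] at h
    linarith only [h]
  have hd1 := discrim_le_zero hlow
  have hd2 := discrim_le_zero hup
  rw [discrim] at hd1 hd2
  have h2' : b1^2 ≤ (P - (1-δ)*r2) * (Q - (1-δ)) := by linarith only [hd1]
  have h3' : b1^2 ≤ ((1+δ)*r2 - P) * ((1+δ) - Q) := by linarith only [hd2]
  have ha : 0 ≤ P - (1-δ)*r2 := by linarith only [hPlow]
  have haU : 0 ≤ (1+δ)*r2 - P := by linarith only [hPup]
  -- sup bound
  have hN0 : 0 < N := lt_of_le_of_lt (Nat.zero_le _) j.isLt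
  haveI hKne : Nonempty {i : Fin N // (i:ℕ) < s} := ⟨⟨⟨0, hN0⟩, hs⟩⟩
  have hbdd : BddAbove (Set.range fun k : {i : Fin N // (i:ℕ) < s} =>
      |(A *ᵥ x) ⬝ᵥ (A *ᵥ (Pi.single (k : Fin N) 1 : Fin N → ℝ))|) :=
    (Set.finite_range _).bddAbove
  have hβ : ∀ k : Fin N, (k:ℕ) < s →
      |(A *ᵥ x) ⬝ᵥ (A *ᵥ (Pi.single k 1 : Fin N → ℝ))| ≤ |b1| := by
    intro k hk
    exact le_trans (le_ciSup hbdd ⟨k, hk⟩) hcon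
  -- P = ∑ x k * c k
  have hAxsum : A *ᵥ x = ∑ k, x k • (A *ᵥ (Pi.single k 1 : Fin N → ℝ)) := by
    have h0 : ∑ k, x k • (Pi.single k 1 : Fin N → ℝ) = x := by
      have h1 : ∀ k : Fin N, x k • (Pi.single k 1 : Fin N → ℝ) = Pi.single k (x k) :=
        fun k => by rw [← Pi.single_smul, smul_eq_mul, mul_one]
      rw [Finset.sum_congr rfl (fun k _ => h1 k), Finset.univ_sum_single]
    calc A *ᵥ x = A.mulVecLin x := rfl
      _ = ∑ k, x k • (A *ᵥ (Pi.single k 1 : Fin N → ℝ)) := by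
          conv_lhs => rw [← h0]
          rw [map_sum]
          exact Finset.sum_congr rfl (fun k _ => by rw [LinearMap.map_smul]; rfl)
  have hPsum : P = ∑ k, x k * ((A *ᵥ x) ⬝ᵥ (A *ᵥ (Pi.single k 1 : Fin N → ℝ))) := by
    rw [hPdef]
    nth_rewrite 2 [hAxsum]
    simp only [dotProduct, Finset.sum_apply, Pi.smul_apply, smul_eq_mul, Finset.mul_sum]
    rw [Finset.sum_comm]
    exact Finset.sum_congr rfl fun k _ => Finset.sum_congr rfl fun i _ => by ring
  -- Cauchy–Schwarz part
  set T : Finset (Fin N) := Finset.univ.filter (fun k => x k ≠ 0) with hT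
  have hTsupp : ∀ k ∈ T, (k:ℕ) < s := by
    intro k hk
    have : x k ≠ 0 := by simpa [hT] using hk
    exact hsupp this
  have hTcard : (T.card : ℝ) ≤ (s : ℝ) := by
    have hcoe : (T : Set (Fin N)) = Function.support x := by
      ext i; simp [hT, Function.mem_support]
    have : T.card ≤ s := by
      rw [← Set.ncard_coe_finset, hcoe]; exact hsx
    exact_mod_cast this
  have hsum1 : P ≤ (∑ k ∈ T, |x k|) * |b1| := by
    rw [hPsum]
    have hzero : ∀ k ∈ Finset.univ \ T, x k * ((A *ᵥ x) ⬝ᵥ (A *ᵥ (Pi.single k 1 : Fin N → ℝ))) = 0 := by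
      intro k hk
      have : x k = 0 := by
        have := Finset.mem_sdiff.mp hk
        simpa [hT] using this.2
      rw [this, zero_mul]
    rw [← Finset.sum_subset (Finset.subset_univ T) (fun k _ hk =>
      hzero k (Finset.mem_sdiff.mpr ⟨Finset.mem_univ k, hk⟩))]
    calc ∑ k ∈ T, x k * ((A *ᵥ x) ⬝ᵥ (A *ᵥ (Pi.single k 1 : Fin N → ℝ)))
        ≤ ∑ k ∈ T, |x k| * |b1| := by
          apply Finset.sum_le_sum
          intro k hk
          calc x k * ((A *ᵥ x) ⬝ᵥ (A *ᵥ (Pi.single k 1 : Fin N → ℝ)))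
              ≤ |x k * ((A *ᵥ x) ⬝ᵥ (A *ᵥ (Pi.single k 1 : Fin N → ℝ)))| := le_abs_self _
            _ = |x k| * |(A *ᵥ x) ⬝ᵥ (A *ᵥ (Pi.single k 1 : Fin N → ℝ))| := abs_mul _ _
            _ ≤ |x k| * |b1| := mul_le_mul_of_nonneg_left (hβ k (hTsupp k hk)) (abs_nonneg _)
      _ = (∑ k ∈ T, |x k|) * |b1| := by rw [Finset.sum_mul]
  have hCS : (∑ k ∈ T, |x k|)^2 ≤ (s:ℝ) * r2 := by
    have h1 := sq_sum_le_card_mul_sum_sq (s := T) (f := fun k => |x k|)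
    have h2 : ∑ k ∈ T, |x k|^2 ≤ r2 := by
      rw [hr2sum]
      calc ∑ k ∈ T, |x k|^2 = ∑ k ∈ T, x k * x k := by
            exact Finset.sum_congr rfl fun k _ => by rw [sq_abs, sq]
        _ ≤ ∑ k, x k * x k := Finset.sum_le_sum_of_subset_of_nonneg (Finset.subset_univ T)
            (fun i _ _ => mul_self_nonneg _)
    have h3 : (0:ℝ) ≤ ∑ k ∈ T, |x k|^2 := Finset.sum_nonneg fun k _ => sq_nonneg _
    calc (∑ k ∈ T, |x k|)^2 ≤ (T.card : ℝ) * ∑ k ∈ T, |x k|^2 := h1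
      _ ≤ (s:ℝ) * r2 := mul_le_mul hTcard h2 h3 (Nat.cast_nonneg s)
  -- sqrt variables
  set u : ℝ := Real.sqrt s with hudef
  set v : ℝ := Real.sqrt ((s:ℝ)+1) with hvdef
  set R : ℝ := Real.sqrt r2 with hRdef
  have hu0 : 0 ≤ u := Real.sqrt_nonneg _
  have hu2 : u^2 = (s:ℝ) := Real.sq_sqrt (Nat.cast_nonneg s)
  have hv2 : v^2 = (s:ℝ)+1 := Real.sq_sqrt (by positivity)
  have hv0 : 0 < v := Real.sqrt_pos.mpr (by positivity)
  have hs1 : (1:ℝ) ≤ (s:ℝ) := by exact_mod_cast hs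
  have hv1 : 1 < v := by nlinarith only [hv2, hv0, hs1]
  have hδv : δ * v < 1 := by
    have h := mul_lt_mul_of_pos_right hδ hv0
    rwa [one_div, inv_mul_cancel₀ (ne_of_gt hv0)] at h
  have hδ0 : 0 ≤ δ := by linarith only [hQlow, hQup]
  have hδ1 : δ < 1 := by nlinarith only [hδv, hv1, hδ0]
  have hR2 : R^2 = r2 := Real.sq_sqrt (le_of_lt hr2pos)
  have hR0 : 0 < R := Real.sqrt_pos.mpr hr2pos
  have hsumR : ∑ k ∈ T, |x k| ≤ u * R := by
    have h1 : Real.sqrt ((s:ℝ) * r2) = u * R := Real.sqrt_mul (Nat.cast_nonneg s) _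
    have h2 : (0:ℝ) ≤ ∑ k ∈ T, |x k| := Finset.sum_nonneg fun k _ => abs_nonneg _
    calc ∑ k ∈ T, |x k| = Real.sqrt ((∑ k ∈ T, |x k|)^2) := (Real.sqrt_sq h2).symm
      _ ≤ Real.sqrt ((s:ℝ) * r2) := Real.sqrt_le_sqrt hCS
      _ = u * R := h1
  have hPub : P ≤ u * R * |b1| :=
    le_trans hsum1 (mul_le_mul_of_nonneg_right hsumR (abs_nonneg _))
  -- endgame
  rcases eq_or_lt_of_le hδ0 with hδe | hδpos
  · -- δ = 0
    have hQ1 : Q - (1-δ) ≤ 0 := by linarith only [hQup, hδe]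
    have hprod : (P - (1-δ)*r2) * (Q - (1-δ)) ≤ 0 :=
      mul_nonpos_of_nonneg_of_nonpos ha hQ1
    have hsq : b1^2 = 0 := le_antisymm (le_trans h2' hprod) (sq_nonneg b1)
    have hb10 : b1 = 0 := pow_eq_zero_iff two_ne_zero |>.mp hsq
    rw [hb10, abs_zero, mul_zero] at hPub
    have : (1-δ)*r2 ≤ 0 := le_trans hPlow hPub
    rw [← hδe] at this
    linarith only [this, hr2pos]
  · -- δ > 0
    have hP0 : 0 ≤ P := by nlinarith only [hPlow, hr2pos, hδ1]
    have hB : r2 * b1^2 ≤ (P - (1-δ)*r2) * (2*δ*r2 - (P - (1-δ)*r2)) := by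
      have k1 := mul_le_mul_of_nonneg_left h3' ha
      have k2 := mul_le_mul_of_nonneg_left h2' haU
      have hsum2 : 2*δ*(r2 * b1^2) ≤ 2*δ*((P - (1-δ)*r2) * (2*δ*r2 - (P - (1-δ)*r2))) := by
        linarith only [k1, k2]
      exact le_of_mul_le_mul_left hsum2 (by linarith only [hδpos])
    have hD : P^2 ≤ (s:ℝ) * r2 * b1^2 := by
      calc P^2 ≤ (u * R * |b1|)^2 := pow_le_pow_left₀ hP0 hPub 2
        _ = u^2 * R^2 * |b1|^2 := by ring
        _ = (s:ℝ) * r2 * b1^2 := by rw [hu2, hR2, sq_abs]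
    have hE : P^2 ≤ (v^2 - 1) * ((P - (1-δ)*r2) * (2*δ*r2 - (P - (1-δ)*r2))) := by
      have hs' : (s:ℝ) = v^2 - 1 := by linarith only [hv2]
      calc P^2 ≤ (s:ℝ) * r2 * b1^2 := hD
        _ = (v^2 - 1) * (r2 * b1^2) := by rw [hs']; ring
        _ ≤ (v^2 - 1) * ((P - (1-δ)*r2) * (2*δ*r2 - (P - (1-δ)*r2))) :=
            mul_le_mul_of_nonneg_left hB (by linarith only [hv2, hs1])
    have hEv := mul_le_mul_of_nonneg_left hE (sq_nonneg v)
    have hkey : 0 < ((v+1)*(1-δ*v)) * ((v-1)*(1+δ*v)) * (r2*r2) := by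
      have p1 : 0 < v + 1 := by linarith only [hv1]
      have p2 : 0 < 1 - δ*v := by linarith only [hδv]
      have p3 : 0 < v - 1 := by linarith only [hv1]
      have p4 : 0 < 1 + δ*v := by
        have := mul_nonneg hδ0 (le_of_lt hv0)
        linarith only [this]
      have p5 : 0 < r2 * r2 := mul_pos hr2pos hr2pos
      exact mul_pos (mul_pos (mul_pos p1 p2) (mul_pos p3 p4)) p5
    linarith only [hEv, hkey, sq_nonneg (v^2*(P - (1-δ)*r2) - (δ*v^2-1)*r2)]
end

section
/- Let s be a positive integer and suppose A ∈ ℝ^{m×N} satisfies the restricted isometry property of order s+1 with some constant δ < 1/√(s+1). If x ∈ ℝ^N is a nonzero vector with at most s nonzero entries, then for every index j ∉ supp(x), max_{k ∈ supp(x)} |⟨Ax, A e_k⟩| > |⟨Ax, A e_j⟩|; in particular, every index maximizing |⟨Ax, A e_k⟩| over all k ∈ {1,…,N} belongs to supp(x). -/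
open Matrix

/-- If `A` satisfies the RIP of order `s+1` with constant `δ < 1/√(s+1)` and
`x ≠ 0` has at most `s` nonzero entries, then for every `j ∉ supp(x)`,
`max_{k ∈ supp(x)} |⟨Ax, A e_k⟩| > |⟨Ax, A e_j⟩|`; in particular every index maximizing
`|⟨Ax, A e_k⟩|` over all `k` belongs to `supp(x)`. -/
theorem omp_first_iteration (s m N : ℕ) (hs : 0 < s)
    (A : Matrix (Fin m) (Fin N) ℝ) (δ : ℝ) (hδ : δ < 1 / Real.sqrt ((s : ℝ) + 1))
    (hRIP : ∀ y : Fin N → ℝ, (Function.support y).ncard ≤ s + 1 →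
      (1 - δ) * (y ⬝ᵥ y) ≤ (A *ᵥ y) ⬝ᵥ (A *ᵥ y) ∧
        (A *ᵥ y) ⬝ᵥ (A *ᵥ y) ≤ (1 + δ) * (y ⬝ᵥ y))
    (x : Fin N → ℝ) (hx : x ≠ 0)
    (hsupp : (Function.support x).ncard ≤ s) :
    (∀ j : Fin N, j ∉ Function.support x →
      |(A *ᵥ x) ⬝ᵥ (A *ᵥ (Pi.single j 1 : Fin N → ℝ))| <
        ⨆ k : Function.support x,
          |(A *ᵥ x) ⬝ᵥ (A *ᵥ (Pi.single (k : Fin N) 1 : Fin N → ℝ))|) ∧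
    ∀ j : Fin N,
      (∀ k : Fin N, |(A *ᵥ x) ⬝ᵥ (A *ᵥ (Pi.single k 1 : Fin N → ℝ))| ≤
          |(A *ᵥ x) ⬝ᵥ (A *ᵥ (Pi.single j 1 : Fin N → ℝ))|) →
      j ∈ Function.support x := by
  classical
  have hSne : (Function.support x).Nonempty := Function.support_nonempty_iff.mpr hx
  haveI hne : Nonempty ↥(Function.support x) := hSne.to_subtype
  obtain ⟨i0, hi0⟩ := Function.ne_iff.mp hx
  have hn2 : 0 < x ⬝ᵥ x :=
    Finset.sum_pos' (fun i _ => mul_self_nonneg _) ⟨i0, Finset.mem_univ _, mul_self_pos.mpr hi0⟩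
  set n2 : ℝ := x ⬝ᵥ x with hn2def
  set sQ : ℝ := Real.sqrt ((s : ℝ) + 1) with hsQdef
  have hsQpos : 0 < sQ := Real.sqrt_pos.mpr (by positivity)
  have hsQ2 : sQ * sQ = (s : ℝ) + 1 := Real.mul_self_sqrt (by positivity)
  have hδs : δ * sQ < 1 := (lt_div_iff₀ hsQpos).mp hδ
  set c : ℝ := Real.sqrt sQ with hcdef
  have hcpos : 0 < c := Real.sqrt_pos.mpr hsQpos
  have hc2 : c * c = sQ := Real.mul_self_sqrt hsQpos.le
  set t : ℝ := Real.sqrt ((s : ℝ) * n2) with htdef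
  have ht0 : 0 ≤ t := Real.sqrt_nonneg _
  have ht2 : t * t = (s : ℝ) * n2 := Real.mul_self_sqrt (by positivity)
  set Sfin : (Function.support x).Finite := Set.toFinite _ with hSfindef
  set F : Finset (Fin N) := Sfin.toFinset with hFdef
  have hFmem : ∀ k, k ∈ F ↔ x k ≠ 0 := fun k => by
    rw [hFdef, Set.Finite.mem_toFinset, Function.mem_support]
  set L : ℝ := ∑ k ∈ F, |x k| with hLdef
  have hL0 : 0 ≤ L := Finset.sum_nonneg fun k _ => abs_nonneg _
  have hFcard : (F.card : ℝ) ≤ (s : ℝ) := by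
    have h1 : (Function.support x).ncard = F.card := by
      rw [hFdef, Set.ncard_eq_toFinset_card _ Sfin]
    exact_mod_cast h1 ▸ hsupp
  have hsum_sq : ∑ k ∈ F, |x k| ^ 2 ≤ n2 := by
    calc ∑ k ∈ F, |x k| ^ 2 = ∑ k ∈ F, x k * x k := by
          refine Finset.sum_congr rfl fun k _ => ?_
          rw [sq_abs, sq]
      _ ≤ ∑ k, x k * x k :=
          Finset.sum_le_sum_of_subset_of_nonneg F.subset_univ
            (fun k _ _ => mul_self_nonneg _)
      _ = n2 := rfl
  have hL2 : L * L ≤ (s : ℝ) * n2 := by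
    have h1 := Finset.sum_mul_sq_le_sq_mul_sq F (fun _ => (1 : ℝ)) (fun k => |x k|)
    simp only [one_mul, one_pow] at h1
    rw [Finset.sum_const, nsmul_eq_mul, mul_one] at h1
    have hsqnn : (0:ℝ) ≤ ∑ k ∈ F, |x k| ^ 2 :=
      Finset.sum_nonneg fun k _ => sq_nonneg _
    nlinarith [h1, hsum_sq, hFcard, hsqnn, Nat.cast_nonneg (α := ℝ) F.card]
  have hLt : L ≤ t := by
    have : L = Real.sqrt (L * L) := (Real.sqrt_mul_self hL0).symm
    rw [this, htdef]
    exact Real.sqrt_le_sqrt hL2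
  -- dot product over sums helper
  have hdotsum : ∀ (u : Fin m → ℝ) (wf : Fin N → Fin m → ℝ),
      u ⬝ᵥ (∑ i, wf i) = ∑ i, u ⬝ᵥ wf i := by
    intro u wf
    simp only [dotProduct, Finset.sum_apply, Finset.mul_sum]
    exact Finset.sum_comm
  have hAsmul : ∀ (b : ℝ) (v : Fin N → ℝ), A *ᵥ (b • v) = b • (A *ᵥ v) := fun b v => by
    simp only [← Matrix.mulVecLin_apply, _root_.map_smul]
  have hGexp : (A *ᵥ x) ⬝ᵥ (A *ᵥ x)
      = ∑ k, x k * ((A *ᵥ x) ⬝ᵥ (A *ᵥ (Pi.single k 1 : Fin N → ℝ))) := by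
    have hxsum : x = ∑ k, x k • (Pi.single k 1 : Fin N → ℝ) := by
      funext i; simp [Finset.sum_apply, Pi.single_apply]
    calc (A *ᵥ x) ⬝ᵥ (A *ᵥ x)
        = (A *ᵥ x) ⬝ᵥ (A *ᵥ (∑ k, x k • (Pi.single k 1 : Fin N → ℝ))) := by rw [← hxsum]
      _ = (A *ᵥ x) ⬝ᵥ (∑ k, x k • (A *ᵥ (Pi.single k 1 : Fin N → ℝ))) := by
          rw [show A *ᵥ (∑ k, x k • (Pi.single k 1 : Fin N → ℝ))
              = ∑ k, x k • (A *ᵥ (Pi.single k 1 : Fin N → ℝ)) by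
            simp only [← Matrix.mulVecLin_apply, map_sum, _root_.map_smul]]
      _ = ∑ k, x k * ((A *ᵥ x) ⬝ᵥ (A *ᵥ (Pi.single k 1 : Fin N → ℝ))) := by
          rw [hdotsum (A *ᵥ x) (fun k => x k • (A *ᵥ (Pi.single k 1 : Fin N → ℝ)))]
          refine Finset.sum_congr rfl fun k _ => ?_
          rw [dotProduct_smul, smul_eq_mul]
  -- dot expansion helpers
  have hdot_add : ∀ u v : Fin N → ℝ,
      (u + v) ⬝ᵥ (u + v) = u ⬝ᵥ u + 2 * (u ⬝ᵥ v) + v ⬝ᵥ v := by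
    intro u v
    simp only [dotProduct_add, add_dotProduct]
    linarith [dotProduct_comm v u]
  have hdot_sub : ∀ u v : Fin N → ℝ,
      (u - v) ⬝ᵥ (u - v) = u ⬝ᵥ u - 2 * (u ⬝ᵥ v) + v ⬝ᵥ v := by
    intro u v
    simp only [dotProduct_sub, sub_dotProduct]
    linarith [dotProduct_comm v u]
  have hdot_add' : ∀ u v : Fin m → ℝ,
      (u + v) ⬝ᵥ (u + v) = u ⬝ᵥ u + 2 * (u ⬝ᵥ v) + v ⬝ᵥ v := by
    intro u v
    simp only [dotProduct_add, add_dotProduct]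
    linarith [dotProduct_comm v u]
  have hdot_sub' : ∀ u v : Fin m → ℝ,
      (u - v) ⬝ᵥ (u - v) = u ⬝ᵥ u - 2 * (u ⬝ᵥ v) + v ⬝ᵥ v := by
    intro u v
    simp only [dotProduct_sub, sub_dotProduct]
    linarith [dotProduct_comm v u]
  have hAdot_add : ∀ u v : Fin N → ℝ,
      (A *ᵥ (u + v)) ⬝ᵥ (A *ᵥ (u + v))
        = (A *ᵥ u) ⬝ᵥ (A *ᵥ u) + 2 * ((A *ᵥ u) ⬝ᵥ (A *ᵥ v)) + (A *ᵥ v) ⬝ᵥ (A *ᵥ v) := by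
    intro u v
    rw [Matrix.mulVec_add]
    exact hdot_add' _ _
  have hAdot_sub : ∀ u v : Fin N → ℝ,
      (A *ᵥ (u - v)) ⬝ᵥ (A *ᵥ (u - v))
        = (A *ᵥ u) ⬝ᵥ (A *ᵥ u) - 2 * ((A *ᵥ u) ⬝ᵥ (A *ᵥ v)) + (A *ᵥ v) ⬝ᵥ (A *ᵥ v) := by
    intro u v
    rw [Matrix.mulVec_sub]
    exact hdot_sub' _ _
  have part1 : ∀ j : Fin N, j ∉ Function.support x →
      |(A *ᵥ x) ⬝ᵥ (A *ᵥ (Pi.single j 1 : Fin N → ℝ))| <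
        ⨆ k : Function.support x,
          |(A *ᵥ x) ⬝ᵥ (A *ᵥ (Pi.single (k : Fin N) 1 : Fin N → ℝ))| := by
    intro j hj
    by_contra hcon
    push_neg at hcon
    have hxj : x j = 0 := Function.notMem_support.mp hj
    set α : ℝ := (A *ᵥ x) ⬝ᵥ (A *ᵥ (Pi.single j 1 : Fin N → ℝ)) with hαdef
    set a : ℝ := |α| with hadef
    have ha0 : 0 ≤ a := abs_nonneg _
    set ε : ℝ := if 0 ≤ α then 1 else -1 with hεdef
    have hεα : ε * α = a := by
      by_cases h : 0 ≤ α
      · rw [hεdef, if_pos h, one_mul, hadef, abs_of_nonneg h]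
      · push_neg at h
        rw [hεdef, if_neg (not_le.mpr h), hadef, abs_of_neg h]; ring
    have hε2 : ε * ε = 1 := by
      by_cases h : 0 ≤ α <;> rw [hεdef] <;> simp [h]
    set w : Fin N → ℝ := x - (t * ε) • (Pi.single j 1 : Fin N → ℝ) with hwdef
    -- bound on each support correlation
    have hQk : ∀ k ∈ F, |(A *ᵥ x) ⬝ᵥ (A *ᵥ (Pi.single k 1 : Fin N → ℝ))| ≤ a := by
      intro k hk
      have hk' : k ∈ Function.support x := Function.mem_support.mpr ((hFmem k).mp hk)
      have hle := le_ciSup (f := fun k : ↥(Function.support x) =>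
          |(A *ᵥ x) ⬝ᵥ (A *ᵥ (Pi.single (k : Fin N) 1 : Fin N → ℝ))|)
        (Set.Finite.bddAbove (Set.finite_range _)) ⟨k, hk'⟩
      exact hle.trans hcon
    have hGle : (A *ᵥ x) ⬝ᵥ (A *ᵥ x) ≤ L * a := by
      rw [hGexp, hLdef, Finset.sum_mul]
      have hzero : ∀ k ∈ Finset.univ, k ∉ F →
          x k * ((A *ᵥ x) ⬝ᵥ (A *ᵥ (Pi.single k 1 : Fin N → ℝ))) = 0 := by
        intro k _ hk
        have hxk : x k = 0 := by
          by_contra h; exact hk ((hFmem k).mpr h)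
        rw [hxk, zero_mul]
      rw [← Finset.sum_subset F.subset_univ hzero]
      refine Finset.sum_le_sum fun k hk => ?_
      calc x k * ((A *ᵥ x) ⬝ᵥ (A *ᵥ (Pi.single k 1 : Fin N → ℝ)))
          ≤ |x k * ((A *ᵥ x) ⬝ᵥ (A *ᵥ (Pi.single k 1 : Fin N → ℝ)))| := le_abs_self _
        _ = |x k| * |(A *ᵥ x) ⬝ᵥ (A *ᵥ (Pi.single k 1 : Fin N → ℝ))| := abs_mul _ _
        _ ≤ |x k| * a := mul_le_mul_of_nonneg_left (hQk k hk) (abs_nonneg _)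
    -- dot products with w
    have hx_single : x ⬝ᵥ (Pi.single j 1 : Fin N → ℝ) = 0 := by
      simp [dotProduct, Pi.single_apply, hxj]
    have hsingle_x : (Pi.single j 1 : Fin N → ℝ) ⬝ᵥ x = 0 := by
      rw [dotProduct_comm]; exact hx_single
    have hsingle_dot : (Pi.single j 1 : Fin N → ℝ) ⬝ᵥ (Pi.single j 1 : Fin N → ℝ) = 1 := by
      simp [dotProduct, Pi.single_apply]
    have hxw : x ⬝ᵥ w = n2 := by
      rw [hwdef, dotProduct_sub, dotProduct_smul, hx_single, smul_zero, sub_zero]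
    have hww : w ⬝ᵥ w = ((s : ℝ) + 1) * n2 := by
      have hexp : w ⬝ᵥ w = x ⬝ᵥ x - (t * ε) * ((Pi.single j 1 : Fin N → ℝ) ⬝ᵥ x)
          - (t * ε) * (x ⬝ᵥ (Pi.single j 1 : Fin N → ℝ))
          + (t * ε) * (t * ε) * ((Pi.single j 1 : Fin N → ℝ) ⬝ᵥ (Pi.single j 1 : Fin N → ℝ)) := by
        rw [hwdef]
        simp only [dotProduct_sub, sub_dotProduct, dotProduct_smul, smul_dotProduct,
          smul_eq_mul]
        ring
      rw [hexp, hsingle_x, hx_single, hsingle_dot, ← hn2def]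
      linear_combination (ε * ε) * ht2 + ((s : ℝ) * n2) * hε2
    have hQxw : (A *ᵥ x) ⬝ᵥ (A *ᵥ w) = (A *ᵥ x) ⬝ᵥ (A *ᵥ x) - t * a := by
      rw [hwdef, Matrix.mulVec_sub, hAsmul, dotProduct_sub, dotProduct_smul, smul_eq_mul,
        ← hαdef, mul_assoc, hεα]
    have hQxw_le : (A *ᵥ x) ⬝ᵥ (A *ᵥ w) ≤ 0 := by
      rw [hQxw]
      have h1 : (A *ᵥ x) ⬝ᵥ (A *ᵥ x) ≤ t * a :=
        hGle.trans (mul_le_mul_of_nonneg_right hLt ha0)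
      linarith
    -- support cardinality helper
    have hSuppCard : ∀ u : Fin N → ℝ, (∀ k, x k = 0 → k ≠ j → u k = 0) →
        (Function.support u).ncard ≤ s + 1 := by
      intro u hu
      have hsub : Function.support u ⊆ Function.support x ∪ {j} := by
        intro k hk
        by_contra hk'
        simp only [Set.mem_union, Function.mem_support, Set.mem_singleton_iff, not_or,
          not_not] at hk'
        exact hk (hu k hk'.1 hk'.2)
      calc (Function.support u).ncard
          ≤ (Function.support x ∪ {j}).ncard :=
            Set.ncard_le_ncard hsub (Set.toFinite _)
        _ ≤ (Function.support x).ncard + ({j} : Set (Fin N)).ncard :=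
            Set.ncard_union_le _ _
        _ ≤ s + 1 := by rw [Set.ncard_singleton]; omega
    set y : Fin N → ℝ := c • x with hydef
    set z : Fin N → ℝ := c⁻¹ • w with hzdef
    have hwk0 : ∀ k, x k = 0 → k ≠ j → w k = 0 := by
      intro k hk hkj
      rw [hwdef]
      simp [hk, Pi.single_eq_of_ne hkj]
    have hcard1 : (Function.support (y + z)).ncard ≤ s + 1 := by
      refine hSuppCard _ fun k hk hkj => ?_
      have hwk := hwk0 k hk hkj
      simp [hydef, hzdef, hk, hwk]
    have hcard2 : (Function.support (y - z)).ncard ≤ s + 1 := by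
      refine hSuppCard _ fun k hk hkj => ?_
      have hwk := hwk0 k hk hkj
      simp [hydef, hzdef, hk, hwk]
    have h1 := (hRIP (y + z) hcard1).1
    have h2 := (hRIP (y - z) hcard2).2
    -- dot values for y z
    have hyy : y ⬝ᵥ y = sQ * n2 := by
      rw [hydef, smul_dotProduct, dotProduct_smul, smul_eq_mul, smul_eq_mul, ← mul_assoc,
        hc2, ← hn2def]
    have hzz : z ⬝ᵥ z = sQ * n2 := by
      rw [hzdef, smul_dotProduct, dotProduct_smul, smul_eq_mul, smul_eq_mul, ← mul_assoc,
        hww]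
      have h : c⁻¹ * c⁻¹ = sQ⁻¹ := by rw [← mul_inv, hc2]
      rw [h, inv_mul_eq_div, div_eq_iff hsQpos.ne']
      linear_combination (-n2) * hsQ2
    have hyz : y ⬝ᵥ z = n2 := by
      rw [hydef, hzdef, smul_dotProduct, dotProduct_smul, smul_eq_mul, smul_eq_mul,
        ← mul_assoc, mul_inv_cancel₀ hcpos.ne', one_mul, hxw]
    have hQyz : (A *ᵥ y) ⬝ᵥ (A *ᵥ z) = (A *ᵥ x) ⬝ᵥ (A *ᵥ w) := by
      rw [hydef, hzdef, hAsmul, hAsmul, smul_dotProduct, dotProduct_smul, smul_eq_mul,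
        smul_eq_mul, ← mul_assoc, mul_inv_cancel₀ hcpos.ne', one_mul]
    -- polarization
    have e1 := hAdot_add y z
    have e2 := hAdot_sub y z
    have d1 := hdot_add y z
    have d2 := hdot_sub y z
    rw [hyy, hzz, hyz] at d1 d2
    rw [d1] at h1
    rw [d2] at h2
    rw [hQyz] at e1 e2
    have h01 : (0:ℝ) < 1 - δ * sQ := by linarith
    have hpos : 0 < n2 - δ * sQ * n2 := by
      have h := mul_pos hn2 h01
      linarith only [h]
    linarith only [h1, h2, e1, e2, hQxw_le, hpos]
  refine ⟨part1, ?_⟩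
  intro j hj
  by_contra hjS
  have h1 := part1 j hjS
  have h2 : (⨆ k : Function.support x,
      |(A *ᵥ x) ⬝ᵥ (A *ᵥ (Pi.single (k : Fin N) 1 : Fin N → ℝ))|)
      ≤ |(A *ᵥ x) ⬝ᵥ (A *ᵥ (Pi.single j 1 : Fin N → ℝ))| :=
    ciSup_le fun k => hj k
  linarith
end

section
/- Let s be a positive integer and suppose A ∈ ℝ^{m×N} satisfies the restricted isometry property of order s+1 with some constant δ < 1/√(s+1). Let x ∈ ℝ^N have at most s nonzero entries, let Ω be a proper subset of supp(x), and let r = Ax − P(Ax), where P is the orthogonal projection of ℝ^m onto the linear span of the columns {A e_i : i ∈ Ω}. Then r ≠ 0, ⟨r, A e_i⟩ = 0 for every i ∈ Ω, and for every index j ∉ supp(x), max_{k ∈ supp(x)} |⟨r, A e_k⟩| > |⟨r, A e_j⟩|; consequently every index maximizing |⟨r, A e_k⟩| over k ∈ {1,…,N} belongs to supp(x) \ Ω. -/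
open Matrix

lemma dot_mulVec_expand {m N : ℕ} (A : Matrix (Fin m) (Fin N) ℝ) (r : Fin m → ℝ) (v : Fin N → ℝ) :
    r ⬝ᵥ (A *ᵥ v) = ∑ k, v k * (r ⬝ᵥ (A *ᵥ Pi.single k 1)) := by
  simp only [dotProduct, mulVec, Pi.single_apply, mul_ite, mul_one, mul_zero,
    Finset.sum_ite_eq', Finset.mem_univ, if_true, Finset.mul_sum]
  rw [Finset.sum_comm]
  exact Finset.sum_congr rfl fun k _ => Finset.sum_congr rfl fun i _ => by ring

lemma l1_sq_le {N : ℕ} (u : Fin N → ℝ) (s : ℕ) (h : (Function.support u).ncard ≤ s) :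
    (∑ k, |u k|) ^ 2 ≤ (s : ℝ) * (u ⬝ᵥ u) := by
  classical
  set S : Finset (Fin N) := (Function.support u).toFinset with hS
  have h1 : (∑ k, |u k|) = ∑ k ∈ S, |u k| := by
    rw [Finset.sum_subset (Finset.subset_univ S)]
    intro i _ hi
    simp only [hS, Set.mem_toFinset, Function.mem_support, not_not] at hi
    simp [hi]
  have h2 : (∑ k ∈ S, (1:ℝ) * |u k|) ^ 2 ≤ (∑ k ∈ S, (1:ℝ)^2) * ∑ k ∈ S, |u k| ^ 2 :=
    Finset.sum_mul_sq_le_sq_mul_sq S _ _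
  have hcard : (S.card : ℝ) ≤ (s : ℝ) := by
    have : S.card = (Function.support u).ncard := by
      rw [hS, Set.ncard_eq_toFinset_card']
    exact_mod_cast this ▸ (Nat.cast_le.mpr h)
  have h3 : ∑ k ∈ S, |u k| ^ 2 ≤ u ⬝ᵥ u := by
    rw [dotProduct]
    have : ∀ k, |u k| ^ 2 = u k * u k := by intro k; rw [sq_abs]; ring
    simp_rw [this]
    exact Finset.sum_le_sum_of_subset_of_nonneg (Finset.subset_univ S)
      (fun i _ _ => mul_self_nonneg _)
  calc (∑ k, |u k|) ^ 2 = (∑ k ∈ S, (1:ℝ) * |u k|) ^ 2 := by rw [h1]; simp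
    _ ≤ (∑ k ∈ S, (1:ℝ)^2) * ∑ k ∈ S, |u k| ^ 2 := h2
    _ = (S.card : ℝ) * ∑ k ∈ S, |u k| ^ 2 := by simp
    _ ≤ (s : ℝ) * (u ⬝ᵥ u) := by
        apply mul_le_mul hcard h3 (Finset.sum_nonneg fun i _ => sq_nonneg _)
          (Nat.cast_nonneg s)

lemma rip_inner {m N : ℕ} (A : Matrix (Fin m) (Fin N) ℝ) (δ : ℝ) (c : ℕ)
    (hRIP : ∀ y : Fin N → ℝ, (Function.support y).ncard ≤ c →
      (1 - δ) * (y ⬝ᵥ y) ≤ (A *ᵥ y) ⬝ᵥ (A *ᵥ y) ∧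
        (A *ᵥ y) ⬝ᵥ (A *ᵥ y) ≤ (1 + δ) * (y ⬝ᵥ y))
    (u h : Fin N → ℝ)
    (hsup : (Function.support u ∪ Function.support h).ncard ≤ c) :
    u ⬝ᵥ h - δ * Real.sqrt (u ⬝ᵥ u) * Real.sqrt (h ⬝ᵥ h) ≤ (A *ᵥ u) ⬝ᵥ (A *ᵥ h) := by
  classical
  by_cases hu : u = 0
  · simp [hu]
  by_cases hh : h = 0
  · simp [hh]
  set a : ℝ := Real.sqrt (h ⬝ᵥ h) with ha
  set b : ℝ := Real.sqrt (u ⬝ᵥ u) with hb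
  have hnu : 0 < u ⬝ᵥ u := by
    have h0 : 0 ≤ u ⬝ᵥ u := by rw [dotProduct]; exact Finset.sum_nonneg fun i _ => mul_self_nonneg _
    rcases lt_or_eq_of_le h0 with h' | h'
    · exact h'
    · exact absurd (dotProduct_self_eq_zero.mp h'.symm) hu
  have hnh : 0 < h ⬝ᵥ h := by
    have h0 : 0 ≤ h ⬝ᵥ h := by rw [dotProduct]; exact Finset.sum_nonneg fun i _ => mul_self_nonneg _
    rcases lt_or_eq_of_le h0 with h' | h'
    · exact h'
    · exact absurd (dotProduct_self_eq_zero.mp h'.symm) hh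
  have hapos : 0 < a := Real.sqrt_pos.mpr hnh
  have hbpos : 0 < b := Real.sqrt_pos.mpr hnu
  have ha2 : a ^ 2 = h ⬝ᵥ h := Real.sq_sqrt hnh.le
  have hb2 : b ^ 2 = u ⬝ᵥ u := Real.sq_sqrt hnu.le
  have hsub1 : Function.support (a • u + b • h) ⊆ Function.support u ∪ Function.support h := by
    intro k hk
    simp only [Function.mem_support, Pi.add_apply, Pi.smul_apply, smul_eq_mul] at hk
    by_contra hc
    simp only [Set.mem_union, Function.mem_support, not_or, not_not] at hc
    simp [hc.1, hc.2] at hk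
  have hsub2 : Function.support (a • u - b • h) ⊆ Function.support u ∪ Function.support h := by
    intro k hk
    simp only [Function.mem_support, Pi.sub_apply, Pi.smul_apply, smul_eq_mul] at hk
    by_contra hc
    simp only [Set.mem_union, Function.mem_support, not_or, not_not] at hc
    simp [hc.1, hc.2] at hk
  have hfin : (Function.support u ∪ Function.support h).Finite := Set.toFinite _
  have hc1 : (Function.support (a • u + b • h)).ncard ≤ c :=
    le_trans (Set.ncard_le_ncard hsub1 hfin) hsup
  have hc2 : (Function.support (a • u - b • h)).ncard ≤ c :=
    le_trans (Set.ncard_le_ncard hsub2 hfin) hsup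
  have H1 := (hRIP _ hc1).1
  have H2 := (hRIP _ hc2).2
  have e1 : A *ᵥ (a • u + b • h) = a • (A *ᵥ u) + b • (A *ᵥ h) := by
    rw [mulVec_add, mulVec_smul, mulVec_smul]
  have e2 : A *ᵥ (a • u - b • h) = a • (A *ᵥ u) - b • (A *ᵥ h) := by
    rw [mulVec_sub, mulVec_smul, mulVec_smul]
  rw [e1] at H1
  rw [e2] at H2
  set P := (A *ᵥ u) ⬝ᵥ (A *ᵥ h) with hP
  set Qu := (A *ᵥ u) ⬝ᵥ (A *ᵥ u) with hQu
  set Qh := (A *ᵥ h) ⬝ᵥ (A *ᵥ h) with hQh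
  have comm1 : (A *ᵥ h) ⬝ᵥ (A *ᵥ u) = P := dotProduct_comm _ _
  have comm2 : h ⬝ᵥ u = u ⬝ᵥ h := dotProduct_comm _ _
  have exp1 : (a • (A *ᵥ u) + b • (A *ᵥ h)) ⬝ᵥ (a • (A *ᵥ u) + b • (A *ᵥ h))
      = a^2 * Qu + 2*a*b*P + b^2 * Qh := by
    simp only [add_dotProduct, dotProduct_add, smul_dotProduct, dotProduct_smul,
      smul_eq_mul, comm1]
    ring
  have exp2 : (a • (A *ᵥ u) - b • (A *ᵥ h)) ⬝ᵥ (a • (A *ᵥ u) - b • (A *ᵥ h))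
      = a^2 * Qu - 2*a*b*P + b^2 * Qh := by
    simp only [sub_dotProduct, dotProduct_sub, smul_dotProduct, dotProduct_smul,
      smul_eq_mul, comm1]
    ring
  have nexp1 : (a • u + b • h) ⬝ᵥ (a • u + b • h)
      = a^2 * (u ⬝ᵥ u) + 2*a*b*(u ⬝ᵥ h) + b^2 * (h ⬝ᵥ h) := by
    simp only [add_dotProduct, dotProduct_add, smul_dotProduct, dotProduct_smul,
      smul_eq_mul, comm2]
    ring
  have nexp2 : (a • u - b • h) ⬝ᵥ (a • u - b • h)
      = a^2 * (u ⬝ᵥ u) - 2*a*b*(u ⬝ᵥ h) + b^2 * (h ⬝ᵥ h) := by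
    simp only [sub_dotProduct, dotProduct_sub, smul_dotProduct, dotProduct_smul,
      smul_eq_mul, comm2]
    ring
  rw [exp1, nexp1] at H1
  rw [exp2, nexp2] at H2
  rw [← ha2, ← hb2] at H1 H2
  have habpos : (0:ℝ) < 4*a*b := by positivity
  have key2 : (4*a*b) * (u ⬝ᵥ h - δ * (b * a)) ≤ (4*a*b) * P := by nlinarith [H1, H2]
  have hfin2 : u ⬝ᵥ h - δ * (b * a) ≤ P := le_of_mul_le_mul_left key2 habpos
  linarith [hfin2]
/-- Let `A` satisfy the RIP of order `s+1` with `δ < 1/√(s+1)`, let `x` be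
`s`-sparse, let `Ω ⊊ supp(x)`, and let `r = Ax − P(Ax)` where `P` is the orthogonal
projection onto the span of the columns `{A e_i : i ∈ Ω}` (characterized here by
`p ∈ span` and `Ax − p ⊥ span`).  Then `r ≠ 0`, `⟨r, A e_i⟩ = 0` for `i ∈ Ω`,
`max_{k ∈ supp(x)} |⟨r, A e_k⟩| > |⟨r, A e_j⟩|` for every `j ∉ supp(x)`, and every
maximizer of `|⟨r, A e_k⟩|` lies in `supp(x) \ Ω`. -/
theorem omp_induction_step (s m N : ℕ) (hs : 0 < s)
    (A : Matrix (Fin m) (Fin N) ℝ) (δ : ℝ) (hδ : δ < 1 / Real.sqrt ((s : ℝ) + 1))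
    (hRIP : ∀ y : Fin N → ℝ, (Function.support y).ncard ≤ s + 1 →
      (1 - δ) * (y ⬝ᵥ y) ≤ (A *ᵥ y) ⬝ᵥ (A *ᵥ y) ∧
        (A *ᵥ y) ⬝ᵥ (A *ᵥ y) ≤ (1 + δ) * (y ⬝ᵥ y))
    (x : Fin N → ℝ) (hsupp : (Function.support x).ncard ≤ s)
    (Ω : Set (Fin N)) (hΩ : Ω ⊂ Function.support x)
    (p : Fin m → ℝ)
    (hpmem : p ∈ Submodule.span ℝ ((fun i => A *ᵥ (Pi.single i 1 : Fin N → ℝ)) '' Ω))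
    (hporth : ∀ v ∈ Submodule.span ℝ ((fun i => A *ᵥ (Pi.single i 1 : Fin N → ℝ)) '' Ω),
      (A *ᵥ x - p) ⬝ᵥ v = 0)
    (r : Fin m → ℝ) (hr : r = A *ᵥ x - p) :
    r ≠ 0 ∧
    (∀ i ∈ Ω, r ⬝ᵥ (A *ᵥ (Pi.single i 1 : Fin N → ℝ)) = 0) ∧
    (∀ j : Fin N, j ∉ Function.support x →
      |r ⬝ᵥ (A *ᵥ (Pi.single j 1 : Fin N → ℝ))| <
        ⨆ k : Function.support x,
          |r ⬝ᵥ (A *ᵥ (Pi.single (k : Fin N) 1 : Fin N → ℝ))|) ∧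
    ∀ j : Fin N,
      (∀ k : Fin N, |r ⬝ᵥ (A *ᵥ (Pi.single k 1 : Fin N → ℝ))| ≤
          |r ⬝ᵥ (A *ᵥ (Pi.single j 1 : Fin N → ℝ))|) →
      j ∈ Function.support x \ Ω := by
  classical
  -- replace δ by δ' = max δ 0
  set δ' : ℝ := max δ 0 with hδ'def
  have hδ'0 : (0:ℝ) ≤ δ' := le_max_right _ _
  have hsqrt_pos : 0 < Real.sqrt ((s:ℝ)+1) := Real.sqrt_pos.mpr (by positivity)
  have hsqrt_one : (1:ℝ) ≤ Real.sqrt ((s:ℝ)+1) := Real.one_le_sqrt.mpr (by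
    have : (1:ℝ) ≤ (s:ℝ) := by exact_mod_cast hs
    linarith)
  have hδ'div : δ' < 1 / Real.sqrt ((s:ℝ)+1) :=
    max_lt hδ (by positivity)
  have hδ's : δ' * Real.sqrt ((s:ℝ)+1) < 1 := (lt_div_iff₀ hsqrt_pos).mp hδ'div
  have hδ'1 : δ' < 1 := lt_of_le_of_lt
    (le_mul_of_one_le_right hδ'0 hsqrt_one) hδ's
  have hRIP' : ∀ y : Fin N → ℝ, (Function.support y).ncard ≤ s + 1 →
      (1 - δ') * (y ⬝ᵥ y) ≤ (A *ᵥ y) ⬝ᵥ (A *ᵥ y) ∧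
        (A *ᵥ y) ⬝ᵥ (A *ᵥ y) ≤ (1 + δ') * (y ⬝ᵥ y) := by
    intro y hy
    obtain ⟨h1, h2⟩ := hRIP y hy
    have hyy : 0 ≤ y ⬝ᵥ y := by
      rw [dotProduct]; exact Finset.sum_nonneg fun i _ => mul_self_nonneg _
    have hle : δ ≤ δ' := le_max_left _ _
    constructor
    · calc (1 - δ') * (y ⬝ᵥ y) ≤ (1 - δ) * (y ⬝ᵥ y) :=
            mul_le_mul_of_nonneg_right (by linarith) hyy
        _ ≤ _ := h1
    · calc (A *ᵥ y) ⬝ᵥ (A *ᵥ y) ≤ (1 + δ) * (y ⬝ᵥ y) := h2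
        _ ≤ (1 + δ') * (y ⬝ᵥ y) := mul_le_mul_of_nonneg_right (by linarith) hyy
  have hΩsub : Ω ⊆ Function.support x := hΩ.subset
  -- extract z with p = A z, supp z ⊆ Ω
  set W : Submodule ℝ (Fin N → ℝ) :=
    { carrier := {y | ∀ k, k ∉ Ω → y k = 0}
      add_mem' := by intro a b ha hb k hk; simp [ha k hk, hb k hk]
      zero_mem' := by intro k hk; rfl
      smul_mem' := by intro cc y hy k hk; simp [hy k hk] } with hWdef
  have hmap : p ∈ Submodule.map A.mulVecLin W := by
    refine Submodule.span_le.mpr ?_ hpmem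
    rintro v ⟨i, hi, rfl⟩
    refine ⟨Pi.single i 1, ?_, A.mulVecLin_apply _⟩
    intro k hk
    have hki : k ≠ i := fun he => hk (by rw [he]; exact hi)
    exact Pi.single_eq_of_ne hki 1
  obtain ⟨z, hzW, hzp⟩ := hmap
  have hzΩ : ∀ k, k ∉ Ω → z k = 0 := hzW
  set u : Fin N → ℝ := x - z with hudef
  have hru : r = A *ᵥ u := by
    rw [hr, ← hzp, mulVecLin_apply, hudef, mulVec_sub]
  have hsuppu : Function.support u ⊆ Function.support x := by
    intro k hk
    simp only [Function.mem_support] at hk ⊢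
    intro hxk
    apply hk
    have hkΩ : k ∉ Ω := fun h => (hΩsub h) hxk
    simp [hudef, hxk, hzΩ k hkΩ]
  have hncardu : (Function.support u).ncard ≤ s :=
    le_trans (Set.ncard_le_ncard hsuppu (Set.toFinite _)) hsupp
  -- u ≠ 0
  obtain ⟨k₁, hk₁x, hk₁Ω⟩ := Set.exists_of_ssubset hΩ
  have huk₁ : u k₁ ≠ 0 := by
    simp only [hudef, Pi.sub_apply, hzΩ k₁ hk₁Ω, sub_zero]
    exact hk₁x
  have hune : u ≠ 0 := fun h0 => huk₁ (by rw [h0]; rfl)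
  -- abbreviation
  set c : Fin N → ℝ := fun k => r ⬝ᵥ (A *ᵥ (Pi.single k 1 : Fin N → ℝ)) with hc
  have hcr : ∀ k : Fin N, r ⬝ᵥ (A *ᵥ (Pi.single k 1 : Fin N → ℝ)) = c k := fun _ => rfl
  have hexp : ∀ v : Fin N → ℝ, r ⬝ᵥ (A *ᵥ v) = ∑ k, v k * c k := fun v =>
    dot_mulVec_expand A r v
  set nu : ℝ := u ⬝ᵥ u with hnudef
  have hnu : 0 < nu := by
    have h0 : 0 ≤ nu := by
      rw [hnudef, dotProduct]; exact Finset.sum_nonneg fun i _ => mul_self_nonneg _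
    rcases lt_or_eq_of_le h0 with h' | h'
    · exact h'
    · exact absurd (dotProduct_self_eq_zero.mp h'.symm) hune
  have hQulb : (1 - δ') * nu ≤ (A *ᵥ u) ⬝ᵥ (A *ᵥ u) :=
    (hRIP' u (le_trans hncardu (Nat.le_succ s))).1
  have hQupos : 0 < (A *ᵥ u) ⬝ᵥ (A *ᵥ u) :=
    lt_of_lt_of_le (by nlinarith) hQulb
  have hrr : r ⬝ᵥ r = (A *ᵥ u) ⬝ᵥ (A *ᵥ u) := by rw [hru]
  -- claim 1
  have claim1 : r ≠ 0 := by
    intro h0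
    rw [h0] at hrr
    simp at hrr
    rw [← hrr] at hQupos
    exact lt_irrefl 0 hQupos
  -- claim 2
  have claim2 : ∀ i ∈ Ω, c i = 0 := by
    intro i hi
    have := hporth (A *ᵥ (Pi.single i 1 : Fin N → ℝ))
      (Submodule.subset_span ⟨i, hi, rfl⟩)
    rw [← hr] at this
    exact this
  -- finset of support
  have hTfin : (Function.support x).Finite := Set.toFinite _
  set T : Finset (Fin N) := hTfin.toFinset with hTdef
  have hTmem : ∀ k, k ∈ T ↔ x k ≠ 0 := by
    intro k; simp [hTdef, Set.Finite.mem_toFinset, Function.mem_support]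
  have hTne : T.Nonempty := ⟨k₁, (hTmem k₁).mpr hk₁x⟩
  set α : ℝ := T.sup' hTne (fun k => |c k|) with hαdef
  obtain ⟨k₀, hk₀T, hk₀⟩ := Finset.exists_mem_eq_sup' hTne (fun k => |c k|)
  have hαnn : 0 ≤ α := by rw [hαdef, hk₀]; exact abs_nonneg _
  -- L
  set L : ℝ := ∑ k, |u k| with hLdef
  have hL2 : L ^ 2 ≤ (s:ℝ) * nu := l1_sq_le u s hncardu
  have hLpos : 0 < L := by
    have h1 : |u k₁| ≤ L :=
      Finset.single_le_sum (fun i _ => abs_nonneg (u i)) (Finset.mem_univ k₁)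
    have h2 : 0 < |u k₁| := abs_pos.mpr huk₁
    linarith
  -- upper bound Qu ≤ L * α
  have hQuub : (A *ᵥ u) ⬝ᵥ (A *ᵥ u) ≤ L * α := by
    have e1 : (A *ᵥ u) ⬝ᵥ (A *ᵥ u) = r ⬝ᵥ (A *ᵥ u) := by rw [hru]
    rw [e1, hexp u, hLdef, Finset.sum_mul]
    apply Finset.sum_le_sum
    intro k _
    by_cases hk : u k = 0
    · simp [hk, hαnn, mul_nonneg (abs_nonneg (u k)) hαnn]
    · have hkT : k ∈ T := (hTmem k).mpr fun hx => hk (by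
        have hkΩ : k ∉ Ω := fun h => (hΩsub h) hx
        simp [hudef, hx, hzΩ k hkΩ])
      calc u k * c k ≤ |u k * c k| := le_abs_self _
        _ = |u k| * |c k| := abs_mul _ _
        _ ≤ |u k| * α := mul_le_mul_of_nonneg_left
              (Finset.le_sup' (fun k => |c k|) hkT) (abs_nonneg _)
  -- key strict inequality
  have key : ∀ j : Fin N, x j = 0 → |c j| < α := by
    intro j hj
    have hjΩ : j ∉ Ω := fun h => (hΩsub h) hj
    have huj : u j = 0 := by simp [hudef, hj, hzΩ j hjΩ]
    set σ : ℝ := if 0 ≤ c j then 1 else -1 with hσdef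
    have hσc : σ * c j = |c j| := by
      rw [hσdef]; split_ifs with h'
      · rw [abs_of_nonneg h']; ring
      · rw [abs_of_neg (lt_of_not_ge h')]; ring
    have hσ2 : σ * σ = 1 := by rw [hσdef]; split_ifs <;> norm_num
    set h : Fin N → ℝ := u - (σ * L) • (Pi.single j 1 : Fin N → ℝ) with hhdef
    -- support bound
    have hsub : Function.support u ∪ Function.support h
        ⊆ insert j (Function.support x) := by
      intro k hk
      rcases hk with hk | hk
      · exact Set.mem_insert_of_mem _ (hsuppu hk)
      · simp only [Function.mem_support, hhdef, Pi.sub_apply, Pi.smul_apply,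
          smul_eq_mul] at hk
        by_cases hkj : k = j
        · exact hkj ▸ Set.mem_insert _ _
        · refine Set.mem_insert_of_mem _ ?_
          have h0 : (Pi.single j 1 : Fin N → ℝ) k = 0 := by
            simp [Pi.single_apply, hkj]
          rw [h0, mul_zero, sub_zero] at hk
          exact hsuppu hk
    have hcard : (Function.support u ∪ Function.support h).ncard ≤ s + 1 := by
      refine le_trans (Set.ncard_le_ncard hsub (Set.toFinite _)) ?_
      exact le_trans (Set.ncard_insert_le _ _) (Nat.add_le_add_right hsupp 1)
    have hinner := rip_inner A δ' (s+1) hRIP' u h hcard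
    -- dot products
    have hdot1 : u ⬝ᵥ h = nu := by
      rw [hhdef]
      simp [dotProduct_sub, dotProduct_smul, dotProduct_single, huj, hnudef]
    have hee : (Pi.single j 1 : Fin N → ℝ) ⬝ᵥ (Pi.single j 1 : Fin N → ℝ) = 1 := by
      rw [dotProduct_single, Pi.single_eq_same, one_mul]
    have hdot2 : h ⬝ᵥ h = nu + L^2 := by
      have e1 : h ⬝ᵥ h = u ⬝ᵥ u - (σ*L)*(u ⬝ᵥ (Pi.single j 1 : Fin N → ℝ))
          - (σ*L)*((Pi.single j 1 : Fin N → ℝ) ⬝ᵥ u)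
          + ((σ*L)*(σ*L))*((Pi.single j 1 : Fin N → ℝ) ⬝ᵥ (Pi.single j 1 : Fin N → ℝ)) := by
        rw [hhdef]
        simp only [sub_dotProduct, dotProduct_sub, dotProduct_smul, smul_dotProduct,
          smul_eq_mul]
        ring
      rw [e1, hee, dotProduct_single, single_dotProduct, huj, hnudef]
      linear_combination (L^2) * hσ2
    -- sqrt bound
    have hnuL : nu + L^2 ≤ ((s:ℝ)+1) * nu := by nlinarith
    have hsq1 : Real.sqrt (h ⬝ᵥ h) ≤ Real.sqrt ((s:ℝ)+1) * Real.sqrt nu := by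
      rw [hdot2, ← Real.sqrt_mul (by positivity)]
      exact Real.sqrt_le_sqrt hnuL
    have hsqnu : Real.sqrt nu * Real.sqrt nu = nu := Real.mul_self_sqrt hnu.le
    have hlb : (1 - δ' * Real.sqrt ((s:ℝ)+1)) * nu ≤ (A *ᵥ u) ⬝ᵥ (A *ᵥ h) := by
      have h1 : δ' * Real.sqrt (u ⬝ᵥ u) * Real.sqrt (h ⬝ᵥ h)
          ≤ δ' * Real.sqrt ((s:ℝ)+1) * nu := by
        rw [← hnudef]
        calc δ' * Real.sqrt nu * Real.sqrt (h ⬝ᵥ h)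
            ≤ δ' * Real.sqrt nu * (Real.sqrt ((s:ℝ)+1) * Real.sqrt nu) := by
              apply mul_le_mul_of_nonneg_left hsq1 (by positivity)
          _ = δ' * Real.sqrt ((s:ℝ)+1) * (Real.sqrt nu * Real.sqrt nu) := by ring
          _ = δ' * Real.sqrt ((s:ℝ)+1) * nu := by rw [hsqnu]
      have h2 := hinner
      rw [hdot1, ← hnudef] at h2
      linarith
    -- compute (A u) ⬝ (A h)
    have hAh : A *ᵥ h = A *ᵥ u - (σ * L) • (A *ᵥ (Pi.single j 1 : Fin N → ℝ)) := by
      rw [hhdef, mulVec_sub, mulVec_smul]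
    have hval : (A *ᵥ u) ⬝ᵥ (A *ᵥ h)
        = (A *ᵥ u) ⬝ᵥ (A *ᵥ u) - L * |c j| := by
      rw [hAh, dotProduct_sub, dotProduct_smul, smul_eq_mul]
      have hcj : (A *ᵥ u) ⬝ᵥ (A *ᵥ (Pi.single j 1 : Fin N → ℝ)) = c j := by
        rw [← hru]
      rw [hcj, ← hσc]
      ring
    have hstrict : 0 < (1 - δ' * Real.sqrt ((s:ℝ)+1)) * nu :=
      mul_pos (by linarith) hnu
    have : L * |c j| < L * α := by
      have := hQuub
      rw [hval] at hlb
      linarith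
    exact (mul_lt_mul_iff_right₀ hLpos).mp this
  -- assembling
  refine ⟨claim1, fun i hi => claim2 i hi, ?_, ?_⟩
  · intro j hj
    have hj0 : x j = 0 := by
      simpa [Function.mem_support, not_not] using hj
    have hbdd : BddAbove (Set.range fun k : Function.support x => |c (k : Fin N)|) :=
      Set.Finite.bddAbove (Set.finite_range _)
    have hk₀x : (k₀ : Fin N) ∈ Function.support x := by
      simpa [Function.mem_support] using (hTmem k₀).mp hk₀T
    have hαk : α = |c k₀| := by rw [hαdef]; exact hk₀
    have hle : α ≤ ⨆ k : Function.support x, |c (k : Fin N)| := by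
      rw [hαk]
      exact le_ciSup hbdd ⟨k₀, hk₀x⟩
    simp only [hcr]
    exact lt_of_lt_of_le (key j hj0) hle
  · intro j hmax
    simp only [hcr] at hmax
    have hjx : x j ≠ 0 := by
      intro hj0
      have h1 := key j hj0
      have h2 := hmax k₀
      have hαk : α = |c k₀| := by rw [hαdef]; exact hk₀
      linarith
    refine ⟨Function.mem_support.mpr hjx, ?_⟩
    intro hjΩ
    have hcj : c j = 0 := claim2 j hjΩ
    have hall : ∀ k, c k = 0 := by
      intro k
      have := hmax k
      rw [hcj, abs_zero] at this
      exact abs_eq_zero.mp (le_antisymm this (abs_nonneg _))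
    have : (A *ᵥ u) ⬝ᵥ (A *ᵥ u) = 0 := by
      have e1 : (A *ᵥ u) ⬝ᵥ (A *ᵥ u) = r ⬝ᵥ (A *ᵥ u) := by rw [hru]
      rw [e1, hexp u]
      simp [hall]
    rw [this] at hQupos
    exact lt_irrefl 0 hQupos
end

section
/- Let s be a positive integer and suppose A ∈ ℝ^{m×N} satisfies the restricted isometry property of order s+1 with some constant δ < 1/√(s+1). Let x ∈ ℝ^N have support of cardinality exactly s, and set b = Ax. Suppose (Ω_k)_{k=0}^{s} is any sequence of index sets with Ω_0 = ∅ and, for each k ∈ {1,…,s}, Ω_k = Ω_{k−1} ∪ {i_k} where i_k is any index maximizing |⟨r_{k−1}, A e_i⟩| over i ∈ {1,…,N}, and r_{k−1} = b − P_{k−1}(b) with P_{k−1} the orthogonal projection of ℝ^m onto the span of {A e_i : i ∈ Ω_{k−1}}. Then Ω_s = supp(x), and x is the unique vector supported in Ω_s with A x = b. (That is, Orthogonal Matching Pursuit recovers every s-sparse signal x from b = Ax in s iterations.) -/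
open Matrix

private lemma dot_self_nonneg' {n : ℕ} (v : Fin n → ℝ) : 0 ≤ v ⬝ᵥ v := by
  have h : v ⬝ᵥ v = ∑ i, v i * v i := rfl
  rw [h]; exact Finset.sum_nonneg fun i _ => mul_self_nonneg (v i)

private lemma omp_dot_expand {m N : ℕ} (A : Matrix (Fin m) (Fin N) ℝ)
    (r : Fin m → ℝ) (u : Fin N → ℝ) :
    r ⬝ᵥ (A *ᵥ u) = ∑ i, u i * (r ⬝ᵥ (A *ᵥ (Pi.single i 1 : Fin N → ℝ))) := by
  have h : ∀ i, r ⬝ᵥ (A *ᵥ (Pi.single i 1 : Fin N → ℝ)) = ∑ j, r j * A j i := by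
    intro i; rw [Matrix.mulVec_single]; simp [dotProduct]
  simp only [h]
  have h2 : r ⬝ᵥ (A *ᵥ u) = ∑ j, r j * ∑ i, A j i * u i := rfl
  rw [h2]
  simp_rw [Finset.mul_sum]
  rw [Finset.sum_comm]
  exact Finset.sum_congr rfl fun i _ => Finset.sum_congr rfl fun j _ => by ring

private lemma omp_arith (σ U R c n δ : ℝ) (hσ : 1 ≤ σ) (hU : 0 < U)
    (hδ0 : 0 ≤ δ) (hδ2 : δ ^ 2 * (σ + 1) < 1)
    (h1 : c ^ 2 ≤ (n - (1 - δ)) * (R - (1 - δ) * U))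
    (h2 : c ^ 2 ≤ ((1 + δ) - n) * ((1 + δ) * U - R))
    (ha : 0 ≤ (1 + δ) * U - R) (hb : 0 ≤ R - (1 - δ) * U)
    (hR : R ^ 2 ≤ σ * U * c ^ 2) : False := by
  rcases hδ0.eq_or_lt with h0 | hpos
  · have hz : (1 + δ) * U - R = 0 := by nlinarith
    rw [hz, mul_zero] at h2
    have hc : c ^ 2 = 0 := le_antisymm h2 (sq_nonneg c)
    rw [hc, mul_zero] at hR
    nlinarith
  · have hsum : (2 * δ * U) * c ^ 2 ≤
        2 * δ * (((1 + δ) * U - R) * (R - (1 - δ) * U)) := by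
      nlinarith [mul_le_mul_of_nonneg_left h1 ha, mul_le_mul_of_nonneg_left h2 hb]
    have key : U * c ^ 2 ≤ ((1 + δ) * U - R) * (R - (1 - δ) * U) := by
      nlinarith [hsum, hpos]
    have k2 : R ^ 2 + σ * (U - R) ^ 2 ≤ σ * δ ^ 2 * U ^ 2 := by
      nlinarith [mul_le_mul_of_nonneg_left key (by linarith : (0:ℝ) ≤ σ), hR]
    have k3 : σ * U ^ 2 ≤ (σ + 1) * (σ * δ ^ 2 * U ^ 2) := by
      nlinarith [sq_nonneg ((σ + 1) * R - σ * U),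
        mul_le_mul_of_nonneg_left k2 (by linarith : (0:ℝ) ≤ σ + 1)]
    nlinarith [k3, hδ2, mul_pos (show (0:ℝ) < σ by linarith) (mul_pos hU hU), hU]

private lemma omp_selection {s m N : ℕ} (hs : 0 < s)
    (A : Matrix (Fin m) (Fin N) ℝ) (δ : ℝ) (hδ0 : 0 ≤ δ)
    (hδ2 : δ ^ 2 * ((s : ℝ) + 1) < 1)
    (hRIP : ∀ y : Fin N → ℝ, (Function.support y).ncard ≤ s + 1 →
      (1 - δ) * (y ⬝ᵥ y) ≤ (A *ᵥ y) ⬝ᵥ (A *ᵥ y) ∧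
        (A *ᵥ y) ⬝ᵥ (A *ᵥ y) ≤ (1 + δ) * (y ⬝ᵥ y))
    (T : Set (Fin N)) (hT : T.ncard ≤ s)
    (u : Fin N → ℝ) (hsupp : Function.support u ⊆ T) (hu : u ≠ 0)
    (j : Fin N) (hj : j ∉ T)
    (hβ : ∀ i : Fin N, |(A *ᵥ u) ⬝ᵥ (A *ᵥ (Pi.single i 1 : Fin N → ℝ))| ≤
      |(A *ᵥ u) ⬝ᵥ (A *ᵥ (Pi.single j 1 : Fin N → ℝ))|) : False := by
  classical
  set e : Fin N → ℝ := Pi.single j 1 with he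
  -- scalar abbreviations (as equations, not `set`, to keep rewriting easy)
  have hσ : (1 : ℝ) ≤ (s : ℝ) := by exact_mod_cast hs
  have huj : u j = 0 := by
    by_contra h
    exact hj (hsupp (Function.mem_support.mpr h))
  have hue : u ⬝ᵥ e = 0 := by rw [he, dotProduct_single, huj, zero_mul]
  have heu : e ⬝ᵥ u = 0 := by rw [dotProduct_comm]; exact hue
  have hee : e ⬝ᵥ e = 1 := by rw [he, dotProduct_single, Pi.single_eq_same, one_mul]
  have hse : Function.support e ⊆ {j} := by
    intro t ht
    rcases eq_or_ne t j with rfl | hne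
    · exact rfl
    · exact absurd (Pi.single_eq_of_ne hne 1) ht
  -- support cardinality of perturbed vectors
  have hcard : ∀ t : ℝ, (Function.support (u + t • e)).ncard ≤ s + 1 := by
    intro t
    have h1 : Function.support (u + t • e) ⊆ T ∪ {j} := by
      refine (Function.support_add _ _).trans (Set.union_subset_union hsupp ?_)
      exact (Function.support_smul_subset_right _ _).trans hse
    calc (Function.support (u + t • e)).ncard ≤ (T ∪ {j}).ncard :=
          Set.ncard_le_ncard h1 (Set.toFinite _)
      _ ≤ T.ncard + ({j} : Set (Fin N)).ncard := Set.ncard_union_le _ _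
      _ ≤ s + 1 := by rw [Set.ncard_singleton]; omega
  have hucard : (Function.support u).ncard ≤ s + 1 :=
    le_trans (le_trans (Set.ncard_le_ncard hsupp (Set.toFinite _)) hT) (Nat.le_succ s)
  -- dot product expansions
  have hdself : ∀ t : ℝ, (u + t • e) ⬝ᵥ (u + t • e) = u ⬝ᵥ u + t * t := by
    intro t
    simp only [add_dotProduct, dotProduct_add, smul_dotProduct, dotProduct_smul,
      smul_eq_mul, hue, heu, hee]
    ring
  have hAdot : ∀ t : ℝ, (A *ᵥ (u + t • e)) ⬝ᵥ (A *ᵥ (u + t • e)) =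
      (A *ᵥ u) ⬝ᵥ (A *ᵥ u) + 2 * ((A *ᵥ u) ⬝ᵥ (A *ᵥ e)) * t +
        ((A *ᵥ e) ⬝ᵥ (A *ᵥ e)) * (t * t) := by
    intro t
    rw [Matrix.mulVec_add, Matrix.mulVec_smul]
    simp only [add_dotProduct, dotProduct_add, smul_dotProduct, dotProduct_smul,
      smul_eq_mul]
    rw [dotProduct_comm (A *ᵥ e) (A *ᵥ u)]
    ring
  -- names
  have hUpos : 0 < u ⬝ᵥ u := by
    rcases (dot_self_nonneg' u).eq_or_lt with h | h
    · exact absurd (dotProduct_self_eq_zero.mp h.symm) hu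
    · exact h
  -- lower quadratic
  have hlow : ∀ t : ℝ, 0 ≤ ((A *ᵥ e) ⬝ᵥ (A *ᵥ e) - (1 - δ)) * (t * t) +
      (2 * ((A *ᵥ u) ⬝ᵥ (A *ᵥ e))) * t +
      ((A *ᵥ u) ⬝ᵥ (A *ᵥ u) - (1 - δ) * (u ⬝ᵥ u)) := by
    intro t
    have h := (hRIP (u + t • e) (hcard t)).1
    rw [hdself t, hAdot t] at h
    nlinarith [h]
  have hupp : ∀ t : ℝ, 0 ≤ ((1 + δ) - (A *ᵥ e) ⬝ᵥ (A *ᵥ e)) * (t * t) +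
      (-(2 * ((A *ᵥ u) ⬝ᵥ (A *ᵥ e)))) * t +
      ((1 + δ) * (u ⬝ᵥ u) - (A *ᵥ u) ⬝ᵥ (A *ᵥ u)) := by
    intro t
    have h := (hRIP (u + t • e) (hcard t)).2
    rw [hdself t, hAdot t] at h
    nlinarith [h]
  have hd1 := discrim_le_zero hlow
  have hd2 := discrim_le_zero hupp
  rw [discrim] at hd1 hd2
  have h1 : ((A *ᵥ u) ⬝ᵥ (A *ᵥ e)) ^ 2 ≤
      ((A *ᵥ e) ⬝ᵥ (A *ᵥ e) - (1 - δ)) *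
        ((A *ᵥ u) ⬝ᵥ (A *ᵥ u) - (1 - δ) * (u ⬝ᵥ u)) := by nlinarith [hd1]
  have h2 : ((A *ᵥ u) ⬝ᵥ (A *ᵥ e)) ^ 2 ≤
      ((1 + δ) - (A *ᵥ e) ⬝ᵥ (A *ᵥ e)) *
        ((1 + δ) * (u ⬝ᵥ u) - (A *ᵥ u) ⬝ᵥ (A *ᵥ u)) := by nlinarith [hd2]
  -- a, b nonneg from RIP at u itself
  have hab := hRIP u hucard
  have ha : 0 ≤ (1 + δ) * (u ⬝ᵥ u) - (A *ᵥ u) ⬝ᵥ (A *ᵥ u) := by linarith [hab.2]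
  have hb : 0 ≤ (A *ᵥ u) ⬝ᵥ (A *ᵥ u) - (1 - δ) * (u ⬝ᵥ u) := by linarith [hab.1]
  -- Cauchy–Schwarz bound : R² ≤ s U c²
  have hδ1 : δ < 1 := by nlinarith [hδ2, hδ0, hσ]
  have hRpos : 0 < (A *ᵥ u) ⬝ᵥ (A *ᵥ u) := by nlinarith [hab.1, hUpos]
  set t : Finset (Fin N) := Finset.univ.filter (fun i => u i ≠ 0) with ht
  have htcoe : (↑t : Set (Fin N)) = Function.support u := by
    ext i; simp [ht, Function.mem_support]
  have htcard : (t.card : ℝ) ≤ (s : ℝ) := by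
    have : t.card = (Function.support u).ncard := by rw [← htcoe, Set.ncard_coe_finset]
    rw [this]
    exact_mod_cast le_trans (Set.ncard_le_ncard hsupp (Set.toFinite _)) hT
  have hRexp : (A *ᵥ u) ⬝ᵥ (A *ᵥ u) =
      ∑ i ∈ t, u i * ((A *ᵥ u) ⬝ᵥ (A *ᵥ (Pi.single i 1 : Fin N → ℝ))) := by
    rw [omp_dot_expand A (A *ᵥ u) u, ht]
    refine (Finset.sum_filter_of_ne ?_).symm
    intro i _ hne hzero
    exact hne (by rw [hzero, zero_mul])
  have hRle : (A *ᵥ u) ⬝ᵥ (A *ᵥ u) ≤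
      (∑ i ∈ t, |u i|) * |(A *ᵥ u) ⬝ᵥ (A *ᵥ e)| := by
    rw [hRexp, Finset.sum_mul]
    refine Finset.sum_le_sum fun i _ => ?_
    calc u i * ((A *ᵥ u) ⬝ᵥ (A *ᵥ (Pi.single i 1 : Fin N → ℝ)))
        ≤ |u i * ((A *ᵥ u) ⬝ᵥ (A *ᵥ (Pi.single i 1 : Fin N → ℝ)))| := le_abs_self _
      _ = |u i| * |(A *ᵥ u) ⬝ᵥ (A *ᵥ (Pi.single i 1 : Fin N → ℝ))| := abs_mul _ _
      _ ≤ |u i| * |(A *ᵥ u) ⬝ᵥ (A *ᵥ e)| :=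
          mul_le_mul_of_nonneg_left (hβ i) (abs_nonneg _)
  have hCS : (∑ i ∈ t, |u i|) ^ 2 ≤ (t.card : ℝ) * (u ⬝ᵥ u) := by
    have h := Finset.sum_mul_sq_le_sq_mul_sq t (fun _ => (1 : ℝ)) (fun i => |u i|)
    simp only [one_mul, one_pow] at h
    have hsum1 : ∑ _i ∈ t, (1 : ℝ) = (t.card : ℝ) := by simp
    have hsq : ∑ i ∈ t, |u i| ^ 2 ≤ u ⬝ᵥ u := by
      have hdef : u ⬝ᵥ u = ∑ i, u i * u i := rfl
      rw [hdef]
      calc ∑ i ∈ t, |u i| ^ 2 = ∑ i ∈ t, u i * u i := by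
            refine Finset.sum_congr rfl fun i _ => ?_
            rw [sq_abs, sq]
        _ ≤ ∑ i, u i * u i :=
            Finset.sum_le_sum_of_subset_of_nonneg (Finset.subset_univ _)
              (fun i _ _ => mul_self_nonneg _)
    calc (∑ i ∈ t, |u i|) ^ 2 ≤ (∑ _i ∈ t, (1:ℝ)) * ∑ i ∈ t, |u i| ^ 2 := h
      _ = (t.card : ℝ) * ∑ i ∈ t, |u i| ^ 2 := by rw [hsum1]
      _ ≤ (t.card : ℝ) * (u ⬝ᵥ u) := by
          exact mul_le_mul_of_nonneg_left hsq (by positivity)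
  have hR : ((A *ᵥ u) ⬝ᵥ (A *ᵥ u)) ^ 2 ≤
      (s : ℝ) * (u ⬝ᵥ u) * ((A *ᵥ u) ⬝ᵥ (A *ᵥ e)) ^ 2 := by
    have h1' : ((A *ᵥ u) ⬝ᵥ (A *ᵥ u)) ^ 2 ≤
        ((∑ i ∈ t, |u i|) * |(A *ᵥ u) ⬝ᵥ (A *ᵥ e)|) ^ 2 :=
      pow_le_pow_left₀ hRpos.le hRle 2
    calc ((A *ᵥ u) ⬝ᵥ (A *ᵥ u)) ^ 2
        ≤ ((∑ i ∈ t, |u i|) * |(A *ᵥ u) ⬝ᵥ (A *ᵥ e)|) ^ 2 := h1'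
      _ = (∑ i ∈ t, |u i|) ^ 2 * ((A *ᵥ u) ⬝ᵥ (A *ᵥ e)) ^ 2 := by
          rw [mul_pow, sq_abs]
      _ ≤ ((t.card : ℝ) * (u ⬝ᵥ u)) * ((A *ᵥ u) ⬝ᵥ (A *ᵥ e)) ^ 2 :=
          mul_le_mul_of_nonneg_right hCS (sq_nonneg _)
      _ ≤ (s : ℝ) * (u ⬝ᵥ u) * ((A *ᵥ u) ⬝ᵥ (A *ᵥ e)) ^ 2 := by
          have := mul_le_mul_of_nonneg_right htcard hUpos.le
          exact mul_le_mul_of_nonneg_right this (sq_nonneg _)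
  exact omp_arith (s : ℝ) (u ⬝ᵥ u) ((A *ᵥ u) ⬝ᵥ (A *ᵥ u)) ((A *ᵥ u) ⬝ᵥ (A *ᵥ e))
    ((A *ᵥ e) ⬝ᵥ (A *ᵥ e)) δ hσ hUpos hδ0 hδ2 h1 h2 ha hb hR


private lemma supp_sub' {N : ℕ} (f g : Fin N → ℝ) :
    Function.support (f - g) ⊆ Function.support f ∪ Function.support g := by
  intro i hi
  by_contra h
  simp only [Set.mem_union, Function.mem_support, not_or, not_not] at h
  exact hi (by simp [Pi.sub_apply, h.1, h.2])


private lemma omp_span_rep {m N : ℕ} (A : Matrix (Fin m) (Fin N) ℝ) (S : Set (Fin N))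
    {v : Fin m → ℝ}
    (hv : v ∈ Submodule.span ℝ ((fun i => A *ᵥ (Pi.single i 1 : Fin N → ℝ)) '' S)) :
    ∃ w : Fin N → ℝ, Function.support w ⊆ S ∧ A *ᵥ w = v := by
  induction hv using Submodule.span_induction with
  | mem y hy =>
    obtain ⟨i, hi, rfl⟩ := hy
    refine ⟨Pi.single i 1, ?_, rfl⟩
    intro t ht
    rcases eq_or_ne t i with rfl | hne
    · exact hi
    · exact absurd (Pi.single_eq_of_ne hne 1) ht
  | zero => exact ⟨0, by simp, by simp [Matrix.mulVec_zero]⟩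
  | add y z hy hz ihy ihz =>
    obtain ⟨w1, h1, rfl⟩ := ihy
    obtain ⟨w2, h2, rfl⟩ := ihz
    exact ⟨w1 + w2, (Function.support_add _ _).trans ((Set.union_subset_union h1 h2).trans (by rw [Set.union_self])),
      Matrix.mulVec_add A w1 w2⟩
  | smul c y hy ihy =>
    obtain ⟨w, h1, rfl⟩ := ihy
    exact ⟨c • w, (Function.support_smul_subset_right _ _).trans h1, Matrix.mulVec_smul A c w⟩



/-- Theorem 1: If `A` satisfies the RIP of order `s+1` with `δ < 1/√(s+1)`,
then OMP recovers every `s`-sparse signal `x` from `b = Ax` in `s` iterations: for any run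
of OMP (with sets `Ω_0 = ∅`, `Ω_{k+1} = Ω_k ∪ {idx k}` where `idx k` maximizes
`|⟨r_k, A e_i⟩|`, `r_k = b − p_k`, and `p_k` the orthogonal projection of `b` onto the span
of the columns indexed by `Ω_k`, characterized by membership and orthogonality of the
residual), one has `Ω_s = supp(x)` and `x` is the unique vector supported in `Ω_s`
with `Ax = b`. -/
theorem omp_exact_recovery (s m N : ℕ) (hs : 0 < s)
    (A : Matrix (Fin m) (Fin N) ℝ) (δ : ℝ) (hδ : δ < 1 / Real.sqrt ((s : ℝ) + 1))
    (hRIP : ∀ y : Fin N → ℝ, (Function.support y).ncard ≤ s + 1 →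
      (1 - δ) * (y ⬝ᵥ y) ≤ (A *ᵥ y) ⬝ᵥ (A *ᵥ y) ∧
        (A *ᵥ y) ⬝ᵥ (A *ᵥ y) ≤ (1 + δ) * (y ⬝ᵥ y))
    (x : Fin N → ℝ) (hx : (Function.support x).ncard = s)
    (b : Fin m → ℝ) (hb : b = A *ᵥ x)
    (Ω : ℕ → Set (Fin N)) (hΩ0 : Ω 0 = ∅)
    (p : ℕ → Fin m → ℝ)
    (hpmem : ∀ k < s,
      p k ∈ Submodule.span ℝ ((fun i => A *ᵥ (Pi.single i 1 : Fin N → ℝ)) '' Ω k))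
    (hporth : ∀ k < s,
      ∀ v ∈ Submodule.span ℝ ((fun i => A *ᵥ (Pi.single i 1 : Fin N → ℝ)) '' Ω k),
        (b - p k) ⬝ᵥ v = 0)
    (idx : ℕ → Fin N)
    (hΩsucc : ∀ k < s, Ω (k + 1) = Ω k ∪ {idx k})
    (hmax : ∀ k < s, ∀ i : Fin N,
      |(b - p k) ⬝ᵥ (A *ᵥ (Pi.single i 1 : Fin N → ℝ))| ≤
        |(b - p k) ⬝ᵥ (A *ᵥ (Pi.single (idx k) 1 : Fin N → ℝ))|) :
    Ω s = Function.support x ∧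
    ∀ y : Fin N → ℝ, Function.support y ⊆ Ω s → A *ᵥ y = b → y = x := by
  classical
  set T := Function.support x with hT
  have hσ : (1 : ℝ) ≤ (s : ℝ) := by exact_mod_cast hs
  -- δ ≥ 0
  have hTne : T.Nonempty := Set.nonempty_of_ncard_ne_zero (by rw [hx]; omega)
  obtain ⟨i₀, hi₀⟩ := hTne
  have hsingle_supp : ∀ i : Fin N, Function.support (Pi.single i (1:ℝ)) ⊆ {i} := by
    intro i t ht
    rcases eq_or_ne t i with rfl | hne
    · exact rfl
    · exact absurd (Pi.single_eq_of_ne hne 1) ht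
  have hsingle_card : (Function.support (Pi.single i₀ (1:ℝ))).ncard ≤ s + 1 := by
    calc (Function.support (Pi.single i₀ (1:ℝ))).ncard ≤ ({i₀} : Set (Fin N)).ncard :=
          Set.ncard_le_ncard (hsingle_supp i₀) (Set.toFinite _)
      _ ≤ s + 1 := by rw [Set.ncard_singleton]; omega
  have hδ0 : 0 ≤ δ := by
    have h := hRIP (Pi.single i₀ 1) hsingle_card
    have hdot : (Pi.single i₀ (1:ℝ)) ⬝ᵥ (Pi.single i₀ 1) = 1 := by
      rw [dotProduct_single, Pi.single_eq_same, one_mul]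
    rw [hdot, mul_one, mul_one] at h
    linarith [h.1, h.2]
  have hsqrt : 0 < Real.sqrt ((s : ℝ) + 1) := Real.sqrt_pos.mpr (by linarith)
  have hδs : δ * Real.sqrt ((s : ℝ) + 1) < 1 := by
    have := (lt_div_iff₀ hsqrt).mp hδ
    linarith
  have hδ2 : δ ^ 2 * ((s : ℝ) + 1) < 1 := by
    have h2 : (Real.sqrt ((s : ℝ) + 1)) ^ 2 = (s : ℝ) + 1 := Real.sq_sqrt (by positivity)
    nlinarith [hδs, mul_nonneg hδ0 hsqrt.le, h2]
  have hδ1 : δ < 1 := by nlinarith [hδ2, hδ0, hσ]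
  -- main induction
  have key : ∀ k, k ≤ s → Ω k ⊆ T ∧ (Ω k).ncard = k := by
    intro k
    induction k with
    | zero => intro _; rw [hΩ0]; exact ⟨Set.empty_subset _, Set.ncard_empty _⟩
    | succ k ih =>
      intro hk1
      have hk : k < s := hk1
      obtain ⟨hsub, hcard⟩ := ih (le_of_lt hk)
      obtain ⟨w, hw_supp, hw_eq⟩ := omp_span_rep A (Ω k) (hpmem k hk)
      have hr : b - p k = A *ᵥ (x - w) := by
        rw [hb, ← hw_eq, ← Matrix.mulVec_sub]
      have hsupp_u : Function.support (x - w) ⊆ T := by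
        refine (supp_sub' x w).trans (Set.union_subset ?_ ?_)
        · exact subset_of_eq hT.symm
        · exact hw_supp.trans hsub
      have hu0 : x - w ≠ 0 := by
        intro h
        have hxw : x = w := by
          have := sub_eq_zero.mp h
          exact this
        have hTsub : T ⊆ Ω k := by rw [hT, hxw]; exact hw_supp
        have := Set.ncard_le_ncard hTsub (Set.toFinite _)
        rw [hx, hcard] at this
        omega
      have hUpos : 0 < (x - w) ⬝ᵥ (x - w) := by
        rcases (dot_self_nonneg' (x - w)).eq_or_lt with h | h
        · exact absurd (dotProduct_self_eq_zero.mp h.symm) hu0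
        · exact h
      have hucard : (Function.support (x - w)).ncard ≤ s + 1 := by
        have := Set.ncard_le_ncard hsupp_u (Set.toFinite _)
        rw [hx] at this
        omega
      have hRpos : 0 < (A *ᵥ (x - w)) ⬝ᵥ (A *ᵥ (x - w)) := by
        have h := (hRIP (x - w) hucard).1
        nlinarith [hUpos]
      have hidxT : idx k ∈ T := by
        by_contra hjT
        exact omp_selection hs A δ hδ0 hδ2 hRIP T (le_of_eq hx) (x - w) hsupp_u hu0
          (idx k) hjT (fun i => by rw [← hr]; exact hmax k hk i)
      have hidxnew : idx k ∉ Ω k := by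
        intro hmem
        have hc0 : (b - p k) ⬝ᵥ (A *ᵥ (Pi.single (idx k) 1 : Fin N → ℝ)) = 0 :=
          hporth k hk _ (Submodule.subset_span ⟨idx k, hmem, rfl⟩)
        have hall : ∀ i : Fin N,
            (A *ᵥ (x - w)) ⬝ᵥ (A *ᵥ (Pi.single i 1 : Fin N → ℝ)) = 0 := by
          intro i
          have h := hmax k hk i
          rw [hc0, abs_zero, hr] at h
          exact abs_eq_zero.mp (le_antisymm h (abs_nonneg _))
        have hzero : (A *ᵥ (x - w)) ⬝ᵥ (A *ᵥ (x - w)) = 0 := by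
          rw [omp_dot_expand A (A *ᵥ (x - w)) (x - w)]
          exact Finset.sum_eq_zero fun i _ => by rw [hall i, mul_zero]
        exact absurd hzero (ne_of_gt hRpos)
      constructor
      · rw [hΩsucc k hk]
        exact Set.union_subset hsub (Set.singleton_subset_iff.mpr hidxT)
      · rw [hΩsucc k hk, Set.union_singleton,
          Set.ncard_insert_of_notMem hidxnew (Set.toFinite _), hcard]
  obtain ⟨hsub, hcard⟩ := key s le_rfl
  have hΩT : Ω s = T :=
    Set.eq_of_subset_of_ncard_le hsub (by rw [hcard, hx]) (Set.toFinite _)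
  refine ⟨hΩT, ?_⟩
  intro y hy hAy
  have hd : A *ᵥ (y - x) = 0 := by rw [Matrix.mulVec_sub, hAy, hb, sub_self]
  have hsupp_d : Function.support (y - x) ⊆ T := by
    refine (supp_sub' y x).trans (Set.union_subset ?_ (subset_of_eq hT.symm))
    rw [← hΩT]; exact hy
  have hcard_d : (Function.support (y - x)).ncard ≤ s + 1 := by
    have := Set.ncard_le_ncard hsupp_d (Set.toFinite _)
    rw [hx] at this
    omega
  have h := (hRIP (y - x) hcard_d).1
  rw [hd] at h
  have hz : (0 : Fin m → ℝ) ⬝ᵥ (0 : Fin m → ℝ) = 0 := zero_dotProduct 0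
  rw [hz] at h
  have hdd : (y - x) ⬝ᵥ (y - x) = 0 := by
    have hnn := dot_self_nonneg' (y - x)
    nlinarith [h, hδ1, hnn]
  have := dotProduct_self_eq_zero.mp hdd
  have : y - x = 0 := this
  exact sub_eq_zero.mp this
end

section
/- Let s be a positive integer and let A be the (s+1)×(s+1) real matrix whose upper-left s×s block is √(s/(s+1))·I_s, whose entries in the last column are A_{k,s+1} = 1/√(s(s+1)) for k = 1,…,s and A_{s+1,s+1} = 1, and whose remaining entries (the first s entries of the last row) are 0. Then for every x ∈ ℝ^{s+1}, (1 − 1/√(s+1))‖x‖₂² ≤ ‖Ax‖₂² ≤ (1 + 1/√(s+1))‖x‖₂²; that is, A satisfies the restricted isometry property of order s+1 with constant 1/√(s+1). -/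
open Matrix

/-- For the `(s+1)×(s+1)` matrix `A` with upper-left block `√(s/(s+1))·I_s`,
last column `(1/√(s(s+1)), …, 1/√(s(s+1)), 1)ᵀ` and zeros in the first `s` entries of the
last row, every `x ∈ ℝ^{s+1}` satisfies
`(1 − 1/√(s+1))‖x‖₂² ≤ ‖Ax‖₂² ≤ (1 + 1/√(s+1))‖x‖₂²`, i.e. `A` satisfies the RIP of
order `s+1` with constant `1/√(s+1)`. -/
theorem omp_example_rip (s : ℕ) (hs : 0 < s)
    (A : Matrix (Fin (s + 1)) (Fin (s + 1)) ℝ)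
    (hA : ∀ i j : Fin (s + 1), A i j =
      if (j : ℕ) < s then (if i = j then Real.sqrt ((s : ℝ) / ((s : ℝ) + 1)) else 0)
      else (if (i : ℕ) < s then 1 / Real.sqrt ((s : ℝ) * ((s : ℝ) + 1)) else 1)) :
    ∀ x : Fin (s + 1) → ℝ,
      (1 - 1 / Real.sqrt ((s : ℝ) + 1)) * (x ⬝ᵥ x) ≤ (A *ᵥ x) ⬝ᵥ (A *ᵥ x) ∧
      (A *ᵥ x) ⬝ᵥ (A *ᵥ x) ≤ (1 + 1 / Real.sqrt ((s : ℝ) + 1)) * (x ⬝ᵥ x) := by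
  intro x
  set a : ℝ := Real.sqrt ((s : ℝ) / ((s : ℝ) + 1)) with ha
  set b : ℝ := 1 / Real.sqrt ((s : ℝ) * ((s : ℝ) + 1)) with hb
  set r : ℝ := Real.sqrt ((s : ℝ) + 1) with hr
  have hs1 : (1 : ℝ) ≤ (s : ℝ) := by exact_mod_cast hs
  have hsp : (0 : ℝ) < (s : ℝ) + 1 := by linarith
  have hr2 : r ^ 2 = (s : ℝ) + 1 := Real.sq_sqrt (by linarith)
  have hr1 : 1 < r := by nlinarith [Real.sqrt_nonneg ((s:ℝ)+1)]
  set t : ℝ := x (Fin.last s) with ht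
  set S : ℝ := ∑ i : Fin s, x i.castSucc with hS
  set Q : ℝ := ∑ i : Fin s, (x i.castSucc) ^ 2 with hQ
  -- entries of A *ᵥ x
  have hy1 : ∀ i : Fin s, (A *ᵥ x) i.castSucc = a * x i.castSucc + b * t := by
    intro i
    simp only [mulVec, dotProduct]
    rw [Fin.sum_univ_castSucc]
    have hlast : A i.castSucc (Fin.last s) = b := by
      rw [hA]; simp [Fin.is_lt]
    rw [hlast]
    have : ∀ j : Fin s, A i.castSucc j.castSucc * x j.castSucc =
        (if i = j then a * x j.castSucc else 0) := by
      intro j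
      rw [hA]
      simp only [Fin.coe_castSucc, Fin.is_lt, if_true]
      by_cases h : i = j
      · simp [h]
      · have : ¬ (i.castSucc = j.castSucc) := by simp [Fin.castSucc_inj, h]
        simp [this, h]
    rw [Finset.sum_congr rfl (fun j _ => this j), Finset.sum_ite_eq (Finset.univ) i
      (fun j => a * x j.castSucc)]
    simp [ht]
  have hy2 : (A *ᵥ x) (Fin.last s) = t := by
    simp only [mulVec, dotProduct]
    rw [Fin.sum_univ_castSucc]
    have h1 : ∀ j : Fin s, A (Fin.last s) j.castSucc = 0 := by
      intro j; rw [hA]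
      simp only [Fin.coe_castSucc, Fin.is_lt, if_true]
      rw [if_neg (Fin.castSucc_lt_last j).ne']
    have h2 : A (Fin.last s) (Fin.last s) = 1 := by
      rw [hA]; simp [Fin.last]
    simp [h1, h2, ht]
  -- algebraic identities
  have ha2 : a ^ 2 = (s : ℝ) / ((s : ℝ) + 1) := Real.sq_sqrt (by positivity)
  have hsqm : Real.sqrt ((s : ℝ) * ((s : ℝ) + 1)) > 0 :=
    Real.sqrt_pos.mpr (by nlinarith)
  have hb2 : b ^ 2 = 1 / ((s : ℝ) * ((s : ℝ) + 1)) := by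
    rw [hb, div_pow, one_pow, Real.sq_sqrt (by nlinarith)]
  have hab : a * b = 1 / ((s : ℝ) + 1) := by
    have h1 : 0 ≤ a * b := mul_nonneg (Real.sqrt_nonneg _) (by positivity)
    have h2 : (a * b) ^ 2 = (1 / ((s : ℝ) + 1)) ^ 2 := by
      rw [mul_pow, ha2, hb2]; field_simp
    rw [← Real.sqrt_sq h1, h2, Real.sqrt_sq (by positivity)]
  -- norms
  have hxx : x ⬝ᵥ x = Q + t ^ 2 := by
    simp only [dotProduct]
    rw [Fin.sum_univ_castSucc]
    simp [hQ, ht, sq]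
  have hAxx : (A *ᵥ x) ⬝ᵥ (A *ᵥ x) =
      a ^ 2 * Q + 2 * (a * b) * t * S + (s : ℝ) * b ^ 2 * t ^ 2 + t ^ 2 := by
    simp only [dotProduct]
    rw [Fin.sum_univ_castSucc, hy2]
    have : ∀ i : Fin s, (A *ᵥ x) i.castSucc * (A *ᵥ x) i.castSucc =
        a ^ 2 * (x i.castSucc) ^ 2 + 2 * (a * b) * t * x i.castSucc + b ^ 2 * t ^ 2 := by
      intro i; rw [hy1 i]; ring
    rw [Finset.sum_congr rfl (fun i _ => this i)]
    rw [Finset.sum_add_distrib, Finset.sum_add_distrib, ← Finset.mul_sum,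
      ← Finset.mul_sum]
    simp [hQ, hS, Finset.sum_const, mul_comm]
    ring
  have hCS : S ^ 2 ≤ (s : ℝ) * Q := by
    have := sq_sum_le_card_mul_sum_sq (s := (Finset.univ : Finset (Fin s)))
      (f := fun i => x i.castSucc)
    simpa [hS, hQ] using this
  have hQ0 : 0 ≤ Q := Finset.sum_nonneg fun i _ => sq_nonneg _
  rw [hxx, hAxx, ha2, hab, hb2]
  have hrpos : (0:ℝ) < r := by linarith
  have hsr : (s : ℝ) = r ^ 2 - 1 := by linarith
  have hCS' : S ^ 2 ≤ (r ^ 2 - 1) * Q := by rw [← hsr]; exact hCS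
  have hM : (s:ℝ)/((s:ℝ)+1)*Q + 2*(1/((s:ℝ)+1))*t*S +
      (s:ℝ)*(1/((s:ℝ)*((s:ℝ)+1)))*t^2 + t^2 =
      ((r^2-1)*Q + 2*t*S + (r^2+1)*t^2)/r^2 := by
    rw [hr2]
    have hs0 : (s:ℝ) ≠ 0 := by linarith
    field_simp
    ring
  rw [hM]
  clear_value a b r t S Q
  constructor
  · rw [le_div_iff₀ (by positivity : (0:ℝ) < r ^ 2)]
    have he : (1 - 1/r) * (Q + t^2) * r^2 = (r^2 - r) * (Q + t^2) := by
      field_simp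
    rw [he]
    have h2 : 0 ≤ (r+1) * ((r-1)*Q + 2*t*S + (r+1)*t^2) := by
      have e : (r+1) * ((r-1)*Q + 2*t*S + (r+1)*t^2) =
          ((r^2-1)*Q - S^2) + (S + (r+1)*t)^2 := by ring
      rw [e]; linarith [sq_nonneg (S + (r+1)*t), hCS']
    have key : 0 ≤ (r-1)*Q + 2*t*S + (r+1)*t^2 :=
      nonneg_of_mul_nonneg_right h2 (by linarith)
    linarith [key]
  · rw [div_le_iff₀ (by positivity : (0:ℝ) < r ^ 2)]
    have he : (1 + 1/r) * (Q + t^2) * r^2 = (r^2 + r) * (Q + t^2) := by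
      field_simp
    rw [he]
    have h2 : 0 ≤ (r-1) * ((r+1)*Q - 2*t*S + (r-1)*t^2) := by
      have e : (r-1) * ((r+1)*Q - 2*t*S + (r-1)*t^2) =
          ((r^2-1)*Q - S^2) + (S - (r-1)*t)^2 := by ring
      rw [e]; linarith [sq_nonneg (S - (r-1)*t), hCS']
    have key : 0 ≤ (r+1)*Q - 2*t*S + (r-1)*t^2 :=
      nonneg_of_mul_nonneg_right h2 (by linarith)
    linarith [key]
end

section
/- Let s be a positive integer and let A be the (s+1)×(s+1) real matrix whose upper-left s×s block is √(s/(s+1))·I_s, whose entries in the last column are A_{k,s+1} = 1/√(s(s+1)) for k = 1,…,s and A_{s+1,s+1} = 1, and whose remaining entries (the first s entries of the last row) are 0. Then for the nonzero vector u = (1, 1, …, 1, 1 − √(s+1))ᵀ ∈ ℝ^{s+1}, one has ‖A u‖₂² = (1 − 1/√(s+1))·‖u‖₂². Consequently, there is no constant δ < 1/√(s+1) such that (1−δ)‖x‖₂² ≤ ‖Ax‖₂² holds for all x ∈ ℝ^{s+1}; that is, the restricted isometry constant δ_{s+1}(A) is exactly 1/√(s+1). -/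
open Matrix

/-- For the `(s+1)×(s+1)` matrix `A` with upper-left block `√(s/(s+1))·I_s`,
last column `(1/√(s(s+1)), …, 1/√(s(s+1)), 1)ᵀ` and zeros in the first `s` entries of the
last row, the nonzero vector `u = (1, …, 1, 1 − √(s+1))ᵀ` satisfies
`‖Au‖₂² = (1 − 1/√(s+1))‖u‖₂²`; consequently no `δ < 1/√(s+1)` satisfies the lower RIP
inequality for all `x`, so `δ_{s+1}(A) = 1/√(s+1)`. -/
theorem omp_example_rip_sharp (s : ℕ) (hs : 0 < s)
    (A : Matrix (Fin (s + 1)) (Fin (s + 1)) ℝ)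
    (hA : ∀ i j : Fin (s + 1), A i j =
      if (j : ℕ) < s then (if i = j then Real.sqrt ((s : ℝ) / ((s : ℝ) + 1)) else 0)
      else (if (i : ℕ) < s then 1 / Real.sqrt ((s : ℝ) * ((s : ℝ) + 1)) else 1))
    (u : Fin (s + 1) → ℝ)
    (hu : u = fun k : Fin (s + 1) =>
      if (k : ℕ) < s then 1 else 1 - Real.sqrt ((s : ℝ) + 1)) :
    u ≠ 0 ∧
    (A *ᵥ u) ⬝ᵥ (A *ᵥ u) = (1 - 1 / Real.sqrt ((s : ℝ) + 1)) * (u ⬝ᵥ u) ∧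
    ∀ δ : ℝ,
      (∀ x : Fin (s + 1) → ℝ, (1 - δ) * (x ⬝ᵥ x) ≤ (A *ᵥ x) ⬝ᵥ (A *ᵥ x)) →
      1 / Real.sqrt ((s : ℝ) + 1) ≤ δ := by
  set a : ℝ := Real.sqrt s with ha_def
  set t : ℝ := Real.sqrt ((s : ℝ) + 1) with ht_def
  have hs' : (0 : ℝ) < s := by exact_mod_cast hs
  have ha : (0 : ℝ) < a := Real.sqrt_pos.2 hs'
  have ht : (0 : ℝ) < t := Real.sqrt_pos.2 (by linarith)
  have ha2 : a * a = s := Real.mul_self_sqrt hs'.le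
  have ht2 : t * t = (s : ℝ) + 1 := Real.mul_self_sqrt (by linarith)
  have ht1 : 1 < t := by
    nlinarith [ht2, ht.le]
  have hr : Real.sqrt ((s : ℝ) / ((s : ℝ) + 1)) = a / t := by
    rw [ha_def, ht_def, Real.sqrt_div hs'.le]
  have hc : Real.sqrt ((s : ℝ) * ((s : ℝ) + 1)) = a * t := by
    rw [ha_def, ht_def, ← Real.sqrt_mul hs'.le]
  -- value of u
  have hulast : u (Fin.last s) = 1 - t := by
    rw [hu]; simp
  -- value of A *ᵥ u
  have hv : ∀ i : Fin (s + 1), (A *ᵥ u) i =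
      if (i : ℕ) < s then (t - 1) / a else 1 - t := by
    intro i
    have hsum : (A *ᵥ u) i = (∑ j : Fin s, A i j.castSucc * u j.castSucc) +
        A i (Fin.last s) * u (Fin.last s) := by
      simp [mulVec, dotProduct, Fin.sum_univ_castSucc]
    rw [hsum]
    by_cases hi : (i : ℕ) < s
    · have hi' : i = (⟨(i : ℕ), hi⟩ : Fin s).castSucc := by
        apply Fin.ext; simp
      have h1 : ∀ j : Fin s, A i j.castSucc * u j.castSucc =
          if (⟨(i : ℕ), hi⟩ : Fin s) = j then a / t else 0 := by
        intro j
        rw [hA, hu]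
        have hj : ((j.castSucc : Fin (s+1)) : ℕ) < s := j.isLt
        simp only [hj, if_true, hr]
        have : (i = j.castSucc) ↔ ((⟨(i : ℕ), hi⟩ : Fin s) = j) := by
          simp [Fin.ext_iff]
        by_cases h : (⟨(i : ℕ), hi⟩ : Fin s) = j
        · simp [this.2 h, h]
        · simp [h, (not_iff_not.2 this).2 h]
      rw [Finset.sum_congr rfl (fun j _ => h1 j), Finset.sum_ite_eq]
      simp only [Finset.mem_univ, if_true]
      rw [hA, hulast]
      have : ¬ (((Fin.last s : Fin (s+1)) : ℕ) < s) := by simp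
      simp only [this, if_false, hi, if_true, hc]
      field_simp
      linear_combination ha2 - ht2
    · have h1 : ∀ j : Fin s, A i j.castSucc * u j.castSucc = 0 := by
        intro j
        rw [hA]
        have hj : ((j.castSucc : Fin (s+1)) : ℕ) < s := j.isLt
        have hne : i ≠ j.castSucc := by
          intro h
          rw [h] at hi
          exact hi hj
        simp [hj, hne]
      rw [Finset.sum_congr rfl (fun j _ => h1 j), Finset.sum_const_zero]
      rw [hA, hulast]
      have : ¬ (((Fin.last s : Fin (s+1)) : ℕ) < s) := by simp
      simp [this, hi]
  -- norms
  have hAu : (A *ᵥ u) ⬝ᵥ (A *ᵥ u) = 2 * (t - 1) ^ 2 := by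
    simp only [dotProduct]
    rw [Fin.sum_univ_castSucc]
    have h1 : ∀ j : Fin s, (A *ᵥ u) j.castSucc * (A *ᵥ u) j.castSucc =
        ((t - 1) / a) ^ 2 := by
      intro j
      rw [hv]
      have hj : ((j.castSucc : Fin (s+1)) : ℕ) < s := j.isLt
      rw [if_pos hj]; ring
    rw [Finset.sum_congr rfl (fun j _ => h1 j), Finset.sum_const, Finset.card_univ,
      Fintype.card_fin, hv]
    have : ¬ (((Fin.last s : Fin (s+1)) : ℕ) < s) := by simp
    rw [if_neg this]
    have hexp : (s : ℝ) * ((t - 1) / a) ^ 2 = (t - 1) ^ 2 := by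
      rw [← ha2]; field_simp
    rw [nsmul_eq_mul]
    nlinarith [hexp]
  have huu : u ⬝ᵥ u = 2 * t * (t - 1) := by
    simp only [dotProduct]
    rw [Fin.sum_univ_castSucc]
    have h1 : ∀ j : Fin s, u j.castSucc * u j.castSucc = 1 := by
      intro j
      rw [hu]
      have hj : ((j.castSucc : Fin (s+1)) : ℕ) < s := j.isLt
      simp [hj]
    rw [Finset.sum_congr rfl (fun j _ => h1 j), Finset.sum_const, Finset.card_univ,
      Fintype.card_fin, hulast, nsmul_eq_mul, mul_one]
    nlinarith [ht2]
  have hmain : (A *ᵥ u) ⬝ᵥ (A *ᵥ u) = (1 - 1 / t) * (u ⬝ᵥ u) := by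
    rw [hAu, huu]
    field_simp
  refine ⟨?_, hmain, ?_⟩
  · intro h0
    have h1 : u ⟨0, by omega⟩ = 0 := by rw [h0]; rfl
    rw [hu] at h1
    simp only [hs, if_pos] at h1
    norm_num at h1
  · intro δ hδ
    have h := hδ u
    rw [hmain] at h
    have hpos : 0 < u ⬝ᵥ u := by rw [huu]; nlinarith
    have : 1 - δ ≤ 1 - 1 / t := le_of_mul_le_mul_right (by linarith [mul_comm (1 - δ) (u ⬝ᵥ u), mul_comm (1 - 1/t) (u ⬝ᵥ u)]) hpos
    linarith
end

section
/- Let s be a positive integer and let A be the (s+1)×(s+1) real matrix whose upper-left s×s block is √(s/(s+1))·I_s, whose entries in the last column are A_{k,s+1} = 1/√(s(s+1)) for k = 1,…,s and A_{s+1,s+1} = 1, and whose remaining entries (the first s entries of the last row) are 0. Let x = (1, 1, …, 1, 0)ᵀ ∈ ℝ^{s+1}. Then ⟨A e_k, A x⟩ = s/(s+1) for every k ∈ {1, …, s+1}; in particular, the index s+1, which lies outside supp(x), attains the maximum of |⟨Ax, A e_k⟩| over all k. -/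
open Matrix

/-- For the `(s+1)×(s+1)` matrix `A` with upper-left block `√(s/(s+1))·I_s`,
last column `(1/√(s(s+1)), …, 1/√(s(s+1)), 1)ᵀ` and zeros in the first `s` entries of the
last row, and `x = (1, …, 1, 0)ᵀ`, one has `⟨A e_k, A x⟩ = s/(s+1)` for every `k`;
in particular the index `s+1`, which lies outside `supp(x)`, attains the maximum of
`|⟨Ax, A e_k⟩|` over all `k`. -/
theorem omp_example_failure_first_step (s : ℕ) (hs : 0 < s)
    (A : Matrix (Fin (s + 1)) (Fin (s + 1)) ℝ)
    (hA : ∀ i j : Fin (s + 1), A i j =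
      if (j : ℕ) < s then (if i = j then Real.sqrt ((s : ℝ) / ((s : ℝ) + 1)) else 0)
      else (if (i : ℕ) < s then 1 / Real.sqrt ((s : ℝ) * ((s : ℝ) + 1)) else 1))
    (x : Fin (s + 1) → ℝ)
    (hx : x = fun k : Fin (s + 1) => if (k : ℕ) < s then 1 else 0) :
    (∀ k : Fin (s + 1),
      (A *ᵥ (Pi.single k 1 : Fin (s + 1) → ℝ)) ⬝ᵥ (A *ᵥ x) = (s : ℝ) / ((s : ℝ) + 1)) ∧
    Fin.last s ∉ Function.support x ∧
    ∀ k : Fin (s + 1),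
      |(A *ᵥ x) ⬝ᵥ (A *ᵥ (Pi.single k 1 : Fin (s + 1) → ℝ))| ≤
        |(A *ᵥ x) ⬝ᵥ (A *ᵥ (Pi.single (Fin.last s) 1 : Fin (s + 1) → ℝ))| := by
  set c : ℝ := Real.sqrt ((s : ℝ) / ((s : ℝ) + 1)) with hc
  set d : ℝ := 1 / Real.sqrt ((s : ℝ) * ((s : ℝ) + 1)) with hd
  have hs1 : (0:ℝ) < (s:ℝ) := by exact_mod_cast hs
  have hs2 : (0:ℝ) < (s:ℝ) + 1 := by linarith
  have hcc : c * c = (s:ℝ) / ((s:ℝ) + 1) := Real.mul_self_sqrt (by positivity)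
  have hdc : d * c = 1 / ((s:ℝ) + 1) := by
    have h1 : Real.sqrt (s:ℝ) ≠ 0 := by positivity
    have h2 : Real.sqrt ((s:ℝ)+1) ≠ 0 := by positivity
    rw [hd, hc, Real.sqrt_div hs1.le, Real.sqrt_mul hs1.le]
    rw [div_mul_div_comm, one_mul]
    rw [div_eq_div_iff (by positivity) (by positivity)]
    rw [one_mul, mul_assoc, Real.mul_self_sqrt hs2.le]
  have hAx : A *ᵥ x = fun i : Fin (s+1) => if (i : ℕ) < s then c else 0 := by
    funext i
    simp only [mulVec, dotProduct, hA, hx]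
    rw [Finset.sum_congr rfl (fun j _ => ?_), Finset.sum_ite_eq' Finset.univ i
      (fun _ => if (i:ℕ) < s then c else 0)]
    · simp
    · by_cases hij : j = i
      · subst hij; by_cases hj : (j:ℕ) < s <;> simp [hj]
      · have h2 : ¬ i = j := fun h => hij h.symm
        by_cases hj : (j:ℕ) < s <;> simp [hj, hij, h2]
  have key : ∀ k : Fin (s+1),
      (A *ᵥ (Pi.single k 1 : Fin (s + 1) → ℝ)) ⬝ᵥ (A *ᵥ x) = (s : ℝ) / ((s : ℝ) + 1) := by
    intro k
    have hcol : (A *ᵥ (Pi.single k 1 : Fin (s + 1) → ℝ)) = fun i => A i k := by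
      funext i
      simp [mulVec, dotProduct, Pi.single_apply]
    rw [hcol, hAx]
    by_cases hk : (k:ℕ) < s
    · simp only [dotProduct]
      rw [Finset.sum_congr rfl (fun i _ => ?_), Finset.sum_ite_eq' Finset.univ k
        (fun _ => c * c)]
      · simp [hk, hcc]
      · rw [hA]
        by_cases hik : i = k
        · subst hik; simp [hk]
        · simp [hk, hik, fun h : i = k => hik h]
    · simp only [dotProduct]
      have : ∀ i ∈ Finset.univ, A i k * (if (i:ℕ) < s then c else 0)
          = if (i:ℕ) < s then d * c else 0 := by
        intro i _
        rw [hA]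
        by_cases hi : (i:ℕ) < s <;> simp [hk, hi]
      rw [Finset.sum_congr rfl this, Fin.sum_univ_castSucc]
      simp only [Fin.coe_castSucc, Fin.is_lt, if_true, Fin.val_last, lt_irrefl, if_false]
      rw [Finset.sum_const, Finset.card_univ, Fintype.card_fin, add_zero, hdc]
      rw [nsmul_eq_mul]
      field_simp
  refine ⟨key, by simp [hx], fun k => ?_⟩
  rw [dotProduct_comm, dotProduct_comm (A *ᵥ x), key k, key (Fin.last s)]
end

section
/- For every positive integer s there exist a matrix A ∈ ℝ^{(s+1)×(s+1)} and an s-sparse vector x ∈ ℝ^{s+1} such that: (i) A satisfies the restricted isometry property of order s+1 with constant 1/√(s+1), and no constant δ < 1/√(s+1) satisfies the RIP inequalities of order s+1 for A (so δ_{s+1}(A) = 1/√(s+1)); and (ii) there exists an index j ∉ supp(x) with |⟨Ax, A e_j⟩| = max_{k ∈ {1,…,s+1}} |⟨Ax, A e_k⟩|, so the first greedy index selection of Orthogonal Matching Pursuit applied to b = Ax may choose an index outside the support of x. -/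
open Matrix Finset

noncomputable def gg (s : ℕ) : ℝ := Real.sqrt (s / (s + 1))

noncomputable def Amat (s : ℕ) : Matrix (Fin (s + 1)) (Fin (s + 1)) ℝ :=
  fun i j =>
    if i = Fin.last s then (if j = Fin.last s then 1 else 0)
    else if j = Fin.last s then gg s / s
    else if j = i then 1 + (gg s - 1) / s else (gg s - 1) / s

lemma Amat_mulVec (s : ℕ) (y : Fin (s + 1) → ℝ) (i : Fin (s + 1)) :
    (Amat s *ᵥ y) i =
      if i = Fin.last s then y (Fin.last s)
      else y i + (gg s - 1) / s * (∑ j ∈ Finset.univ.erase (Fin.last s), y j)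
        + gg s / s * y (Fin.last s) := by
  classical
  simp only [Matrix.mulVec, dotProduct, Amat]
  by_cases hi : i = Fin.last s
  · simp [hi, ite_mul, Finset.sum_ite_eq']
  · simp only [hi, if_false]
    rw [← Finset.sum_erase_add _ _ (Finset.mem_univ (Fin.last s)), if_pos rfl]
    have : ∀ j ∈ Finset.univ.erase (Fin.last s),
        (if j = Fin.last s then gg s / s
          else if j = i then 1 + (gg s - 1) / s else (gg s - 1) / s) * y j
        = (gg s - 1) / s * y j + (if j = i then y j else 0) := by
      intro j hj
      rw [if_neg (Finset.ne_of_mem_erase hj)]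
      by_cases h : j = i <;> simp [h] <;> ring
    rw [Finset.sum_congr rfl this, Finset.sum_add_distrib, ← Finset.mul_sum,
      Finset.sum_ite_eq' _ i, if_pos (Finset.mem_erase.2 ⟨hi, Finset.mem_univ i⟩)]
    ring

lemma Amat_dot (s : ℕ) (hs : 0 < s) (y z : Fin (s + 1) → ℝ) :
    (Amat s *ᵥ y) ⬝ᵥ (Amat s *ᵥ z) =
      y ⬝ᵥ z +
        ((gg s) ^ 2 *
            ((∑ j ∈ Finset.univ.erase (Fin.last s), y j) + y (Fin.last s)) *
            ((∑ j ∈ Finset.univ.erase (Fin.last s), z j) + z (Fin.last s)) -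
          (∑ j ∈ Finset.univ.erase (Fin.last s), y j) *
            (∑ j ∈ Finset.univ.erase (Fin.last s), z j)) / s := by
  classical
  set Sy := ∑ j ∈ Finset.univ.erase (Fin.last s), y j with hSy
  set Sz := ∑ j ∈ Finset.univ.erase (Fin.last s), z j with hSz
  set By := y (Fin.last s)
  set Bz := z (Fin.last s)
  set K1 := (gg s - 1) / s * Sy + gg s / s * By with hK1
  set K2 := (gg s - 1) / s * Sz + gg s / s * Bz with hK2
  have hsum : ∀ w : Fin (s+1) → ℝ, w ⬝ᵥ w = w ⬝ᵥ w := fun _ => rfl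
  have hdot : ∀ u v : Fin (s+1) → ℝ, u ⬝ᵥ v = ∑ i, u i * v i := fun _ _ => rfl
  rw [hdot, hdot, ← Finset.sum_erase_add _ _ (Finset.mem_univ (Fin.last s)),
    ← Finset.sum_erase_add Finset.univ (fun i => y i * z i) (Finset.mem_univ (Fin.last s))]
  have h1 : ∀ i ∈ Finset.univ.erase (Fin.last s),
      (Amat s *ᵥ y) i * (Amat s *ᵥ z) i
        = y i * z i + K2 * y i + K1 * z i + K1 * K2 := by
    intro i hi
    rw [Amat_mulVec, Amat_mulVec, if_neg (Finset.ne_of_mem_erase hi),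
      if_neg (Finset.ne_of_mem_erase hi)]
    rw [hK1, hK2]; ring
  rw [Finset.sum_congr rfl h1]
  rw [Amat_mulVec, Amat_mulVec, if_pos rfl, if_pos rfl]
  simp only [Finset.sum_add_distrib, ← Finset.mul_sum, Finset.sum_const,
    Finset.card_erase_of_mem (Finset.mem_univ _), Finset.card_univ, Fintype.card_fin,
    Nat.add_sub_cancel, nsmul_eq_mul]
  rw [← hSy, ← hSz, hK1, hK2]
  have hs' : (s : ℝ) ≠ 0 := Nat.cast_ne_zero.2 hs.ne'
  field_simp
  ring

lemma gg_sq (s : ℕ) : gg s ^ 2 = s / (s + 1) := by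
  rw [gg, Real.sq_sqrt]; positivity

lemma sqrt_sq' (s : ℕ) : Real.sqrt ((s : ℝ) + 1) ^ 2 = (s : ℝ) + 1 := by
  rw [Real.sq_sqrt]; positivity

lemma sqrt_pos' (s : ℕ) : 0 < Real.sqrt ((s : ℝ) + 1) := by
  apply Real.sqrt_pos.2; positivity

lemma rip_abs (s : ℕ) (hs : 0 < s) (y : Fin (s + 1) → ℝ) :
    |(Amat s *ᵥ y) ⬝ᵥ (Amat s *ᵥ y) - y ⬝ᵥ y| ≤
      (1 / Real.sqrt ((s : ℝ) + 1)) * (y ⬝ᵥ y) := by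
  classical
  rw [Amat_dot s hs y y]
  set S := ∑ j ∈ Finset.univ.erase (Fin.last s), y j with hS
  set B := y (Fin.last s) with hB
  set Q := ∑ j ∈ Finset.univ.erase (Fin.last s), (y j) ^ 2 with hQ
  set t := Real.sqrt ((s : ℝ) + 1) with htdef
  have ht : 0 < t := sqrt_pos' s
  have ht2 : t ^ 2 = (s : ℝ) + 1 := sqrt_sq' s
  have hyy : y ⬝ᵥ y = Q + B ^ 2 := by
    show ∑ i, y i * y i = Q + B ^ 2
    rw [← Finset.sum_erase_add Finset.univ (fun i => y i * y i) (Finset.mem_univ (Fin.last s))]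
    simp [hQ, sq, hB]
  have hQ0 : 0 ≤ Q := Finset.sum_nonneg fun j _ => sq_nonneg _
  have hSQ : S ^ 2 ≤ (s : ℝ) * Q := by
    have h := sq_sum_le_card_mul_sum_sq (s := Finset.univ.erase (Fin.last s)) (f := y)
    rw [Finset.card_erase_of_mem (Finset.mem_univ _), Finset.card_univ, Fintype.card_fin,
      Nat.add_sub_cancel] at h
    exact_mod_cast h
  have hsR : (0 : ℝ) < s := Nat.cast_pos.2 hs
  have core : |(s : ℝ) * B ^ 2 + 2 * s * S * B - S ^ 2| ≤ t * (S ^ 2 + s * B ^ 2) := by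
    have hY : (0 : ℝ) ≤ S ^ 2 + s * B ^ 2 := by positivity
    have hsq : ((s : ℝ) * B ^ 2 + 2 * s * S * B - S ^ 2) ^ 2 ≤ (t * (S ^ 2 + s * B ^ 2)) ^ 2 := by
      have hid : (t * (S ^ 2 + s * B ^ 2)) ^ 2 - ((s : ℝ) * B ^ 2 + 2 * s * S * B - S ^ 2) ^ 2
          = (s : ℝ) * ((s : ℝ) * B ^ 2 - S ^ 2 - 2 * S * B) ^ 2 := by
        rw [mul_pow, ht2]; ring
      nlinarith [mul_nonneg hsR.le (sq_nonneg ((s : ℝ) * B ^ 2 - S ^ 2 - 2 * S * B))]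
    calc |(s : ℝ) * B ^ 2 + 2 * s * S * B - S ^ 2|
        = Real.sqrt (((s : ℝ) * B ^ 2 + 2 * s * S * B - S ^ 2) ^ 2) := (Real.sqrt_sq_eq_abs _).symm
      _ ≤ Real.sqrt ((t * (S ^ 2 + s * B ^ 2)) ^ 2) := Real.sqrt_le_sqrt hsq
      _ = |t * (S ^ 2 + s * B ^ 2)| := Real.sqrt_sq_eq_abs _
      _ = t * (S ^ 2 + s * B ^ 2) := abs_of_nonneg (by positivity)
  have hDeq : (gg s ^ 2 * (S + B) * (S + B) - S * S) / (s : ℝ)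
      = ((s : ℝ) * B ^ 2 + 2 * s * S * B - S ^ 2) / ((s : ℝ) * ((s : ℝ) + 1)) := by
    rw [gg_sq]
    field_simp
    ring
  rw [hyy]
  have hx : Q + B ^ 2 + (gg s ^ 2 * (S + B) * (S + B) - S * S) / ↑s - (Q + B ^ 2)
      = ((s : ℝ) * B ^ 2 + 2 * s * S * B - S ^ 2) / ((s : ℝ) * ((s : ℝ) + 1)) := by
    rw [hDeq]; ring
  rw [hx, abs_div, abs_of_pos (by positivity : (0:ℝ) < (s : ℝ) * ((s : ℝ) + 1))]
  rw [div_le_iff₀ (by positivity)]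
  calc |(s : ℝ) * B ^ 2 + 2 * s * S * B - S ^ 2|
      ≤ t * (S ^ 2 + s * B ^ 2) := core
    _ ≤ t * ((s : ℝ) * Q + s * B ^ 2) := by
        apply mul_le_mul_of_nonneg_left _ ht.le
        linarith
    _ = 1 / t * (Q + B ^ 2) * ((s : ℝ) * ((s : ℝ) + 1)) := by
        field_simp
        linear_combination (Q + B ^ 2) * ht2

lemma omp_val (s : ℕ) (hs : 0 < s) (k : Fin (s + 1)) :
    (Amat s *ᵥ (fun i => if i = Fin.last s then (0:ℝ) else 1)) ⬝ᵥ
      (Amat s *ᵥ (Pi.single k 1 : Fin (s + 1) → ℝ)) = gg s ^ 2 := by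
  classical
  rw [Amat_dot s hs]
  have hcard : (Finset.univ.erase (Fin.last s)).card = s := by
    rw [Finset.card_erase_of_mem (Finset.mem_univ _), Finset.card_univ, Fintype.card_fin,
      Nat.add_sub_cancel]
  have hx1 : ∑ j ∈ Finset.univ.erase (Fin.last s),
      (if j = Fin.last s then (0:ℝ) else 1) = s := by
    rw [Finset.sum_congr rfl (fun j hj => if_neg (Finset.ne_of_mem_erase hj))]
    simp [hcard]
  have hz1 : ∑ j ∈ Finset.univ.erase (Fin.last s), (Pi.single k 1 : Fin (s+1) → ℝ) j
      = if k = Fin.last s then 0 else 1 := by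
    simp only [Pi.single_apply]
    rw [Finset.sum_ite_eq' (Finset.univ.erase (Fin.last s)) k]
    by_cases hk : k = Fin.last s
    · simp [hk]
    · simp [Finset.mem_erase, hk]
  have hdotxz : (fun i => if i = Fin.last s then (0:ℝ) else 1) ⬝ᵥ
      (Pi.single k 1 : Fin (s+1) → ℝ) = if k = Fin.last s then 0 else 1 := by
    rw [dotProduct_single, mul_one]
  have hB : (Pi.single k 1 : Fin (s+1) → ℝ) (Fin.last s) = if k = Fin.last s then 1 else 0 := by
    rcases eq_or_ne k (Fin.last s) with h | h
    · subst h; simp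
    · simp [Pi.single_apply, h, (Ne.symm h)]
  rw [hx1, hz1, hdotxz, hB]
  have hsR : ((s : ℝ)) ≠ 0 := Nat.cast_ne_zero.2 hs.ne'
  rcases eq_or_ne k (Fin.last s) with hk | hk
  · simp only [hk, if_pos rfl, if_true]
    field_simp
    try ring
  · simp only [if_neg hk, if_true]
    field_simp
    try ring

lemma sharp_eq (s : ℕ) (hs : 0 < s) :
    (Amat s *ᵥ (fun i => if i = Fin.last s then
        1 + 1 / Real.sqrt ((s : ℝ) + 1) else 1 / Real.sqrt ((s : ℝ) + 1))) ⬝ᵥ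
      (Amat s *ᵥ (fun i => if i = Fin.last s then
        1 + 1 / Real.sqrt ((s : ℝ) + 1) else 1 / Real.sqrt ((s : ℝ) + 1)))
    = (1 + 1 / Real.sqrt ((s : ℝ) + 1)) *
      ((fun i => if i = Fin.last s then
        1 + 1 / Real.sqrt ((s : ℝ) + 1) else 1 / Real.sqrt ((s : ℝ) + 1)) ⬝ᵥ
       (fun i => if i = Fin.last s then
        1 + 1 / Real.sqrt ((s : ℝ) + 1) else 1 / Real.sqrt ((s : ℝ) + 1))) := by
  classical
  set t := Real.sqrt ((s : ℝ) + 1) with htdef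
  have ht : 0 < t := sqrt_pos' s
  have ht2 : t ^ 2 = (s : ℝ) + 1 := sqrt_sq' s
  set y : Fin (s + 1) → ℝ := fun i => if i = Fin.last s then 1 + 1 / t else 1 / t with hy
  have hcard : (Finset.univ.erase (Fin.last s)).card = s := by
    rw [Finset.card_erase_of_mem (Finset.mem_univ _), Finset.card_univ, Fintype.card_fin,
      Nat.add_sub_cancel]
  have hS : ∑ j ∈ Finset.univ.erase (Fin.last s), y j = s * (1 / t) := by
    rw [Finset.sum_congr rfl (fun j hj => ?_), Finset.sum_const, hcard, nsmul_eq_mul]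
    rw [hy]; exact if_neg (Finset.ne_of_mem_erase hj)
  have hB : y (Fin.last s) = 1 + 1 / t := by simp [hy]
  have hyy : y ⬝ᵥ y = s * (1 / t) ^ 2 + (1 + 1 / t) ^ 2 := by
    show ∑ i, y i * y i = _
    rw [← Finset.sum_erase_add Finset.univ (fun i => y i * y i) (Finset.mem_univ (Fin.last s))]
    have h1 : ∀ j ∈ Finset.univ.erase (Fin.last s), y j * y j = (1 / t) ^ 2 := by
      intro j hj; rw [hy]; simp only [if_neg (Finset.ne_of_mem_erase hj)]; ring
    rw [Finset.sum_congr rfl h1, Finset.sum_const, hcard, nsmul_eq_mul, hB]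
    ring
  rw [Amat_dot s hs, hS, hB, hyy, gg_sq]
  have htne : t ≠ 0 := ht.ne'
  have hsR : ((s : ℝ)) ≠ 0 := Nat.cast_ne_zero.2 hs.ne'
  have hsub : (s : ℝ) = t ^ 2 - 1 := by linarith
  rw [hsub]
  have h1 : t ^ 2 - 1 ≠ 0 := by
    have : (1 : ℝ) ≤ (s : ℝ) := Nat.one_le_cast.2 hs
    rw [← hsub]; linarith
  field_simp
  ring

/-- Theorem 2: For every positive integer `s` there exist a matrix
`A ∈ ℝ^{(s+1)×(s+1)}` and an `s`-sparse vector `x ∈ ℝ^{s+1}` such that (i) `A` satisfies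
the RIP of order `s+1` with constant `1/√(s+1)` and no smaller constant works, i.e.
`δ_{s+1}(A) = 1/√(s+1)`; and (ii) some index `j ∉ supp(x)` attains the maximum of
`|⟨Ax, A e_k⟩|`, so the first greedy step of OMP applied to `b = Ax` may choose an index
outside the support of `x`. -/
theorem omp_sharpness (s : ℕ) (hs : 0 < s) :
    ∃ (A : Matrix (Fin (s + 1)) (Fin (s + 1)) ℝ) (x : Fin (s + 1) → ℝ),
      (Function.support x).ncard ≤ s ∧
      (∀ y : Fin (s + 1) → ℝ, (Function.support y).ncard ≤ s + 1 →
        (1 - 1 / Real.sqrt ((s : ℝ) + 1)) * (y ⬝ᵥ y) ≤ (A *ᵥ y) ⬝ᵥ (A *ᵥ y) ∧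
          (A *ᵥ y) ⬝ᵥ (A *ᵥ y) ≤ (1 + 1 / Real.sqrt ((s : ℝ) + 1)) * (y ⬝ᵥ y)) ∧
      (∀ δ : ℝ,
        (∀ y : Fin (s + 1) → ℝ, (Function.support y).ncard ≤ s + 1 →
          (1 - δ) * (y ⬝ᵥ y) ≤ (A *ᵥ y) ⬝ᵥ (A *ᵥ y) ∧
            (A *ᵥ y) ⬝ᵥ (A *ᵥ y) ≤ (1 + δ) * (y ⬝ᵥ y)) →
        1 / Real.sqrt ((s : ℝ) + 1) ≤ δ) ∧
      ∃ j : Fin (s + 1), j ∉ Function.support x ∧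
        ∀ k : Fin (s + 1),
          |(A *ᵥ x) ⬝ᵥ (A *ᵥ (Pi.single k 1 : Fin (s + 1) → ℝ))| ≤
            |(A *ᵥ x) ⬝ᵥ (A *ᵥ (Pi.single j 1 : Fin (s + 1) → ℝ))| := by
  classical
  refine ⟨Amat s, fun i => if i = Fin.last s then (0:ℝ) else 1, ?_, ?_, ?_, ?_⟩
  · -- support ncard ≤ s
    have hset : Function.support (fun i : Fin (s+1) => if i = Fin.last s then (0:ℝ) else 1)
        = ↑(Finset.univ.erase (Fin.last s)) := by
      ext i
      simp only [Function.mem_support, Finset.coe_erase, Set.mem_diff,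
        Finset.coe_univ, Set.mem_univ, true_and, Set.mem_singleton_iff]
      rcases eq_or_ne i (Fin.last s) with h | h <;> simp [h]
    rw [hset, Set.ncard_coe_finset, Finset.card_erase_of_mem (Finset.mem_univ _),
      Finset.card_univ, Fintype.card_fin, Nat.add_sub_cancel]
  · -- RIP
    intro y _
    have h := rip_abs s hs y
    have h2 := abs_le.1 h
    constructor <;> nlinarith [h2.1, h2.2]
  · -- sharpness
    intro δ hδ
    set t := Real.sqrt ((s : ℝ) + 1) with htdef
    have ht : 0 < t := sqrt_pos' s
    set y : Fin (s + 1) → ℝ := fun i => if i = Fin.last s then 1 + 1 / t else 1 / t with hy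
    have hsupp : (Function.support y).ncard ≤ s + 1 := by
      have h1 := Set.ncard_le_ncard (Set.subset_univ (Function.support y))
        Set.finite_univ
      rw [Set.ncard_univ] at h1
      simpa using h1
    have h2 := (hδ y hsupp).2
    rw [sharp_eq s hs] at h2
    have hyy : 0 < y ⬝ᵥ y := by
      have : y ⬝ᵥ y = ∑ i, y i * y i := rfl
      rw [this]
      apply Finset.sum_pos
      · intro i _
        rcases eq_or_ne i (Fin.last s) with h | h
        · rw [hy]; simp only [h, if_pos rfl]; positivity
        · rw [hy]; simp only [if_neg h]; positivity
      · exact ⟨Fin.last s, Finset.mem_univ _⟩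
    nlinarith [h2, hyy]
  · -- OMP
    refine ⟨Fin.last s, ?_, ?_⟩
    · simp [Function.mem_support]
    · intro k
      rw [omp_val s hs k, omp_val s hs (Fin.last s)]
end
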